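/- arXiv:2305.06260 — 8 statements merged into one kernel-verified Lean document; each statement's English description precedes it below -/
import Mathlib

section
/- If f is a multiplicative arithmetic function and c is a positive integer with f(c) ≠ 0, then the function n ↦ f(c·n)/f(c) is multiplicative. -/
lemma key_aux (f : ℕ → ℂ) (hf1 : f 1 = 1)
    (hf : ∀ m n : ℕ, Nat.Coprime m n → f (m * n) = f m * f n) :
    ∀ c, 0 < c → ∀ m n : ℕ, Nat.Coprime m n →
      f (c * (m * n)) * f c = f (c * m) * f (c * n) := by
  intro c
  induction c using Nat.strong_induction_on with
  | _ c IH =>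
    intro hc m n hmn
    rcases Nat.lt_or_ge c 2 with h2 | h2
    · interval_cases c
      simp only [one_mul, hf1, mul_one]
      exact hf m n hmn
    rcases Nat.eq_zero_or_pos m with rfl | hm
    · have : n = 1 := Nat.coprime_zero_left n |>.mp hmn
      subst this; simp [mul_comm]
    rcases Nat.eq_zero_or_pos n with rfl | hn
    · have : m = 1 := Nat.coprime_zero_right m |>.mp hmn
      subst this; simp [mul_comm]
    set p := c.minFac with hpdef
    have hp : p.Prime := Nat.minFac_prime (by omega)
    have hpc : p ∣ c := Nat.minFac_dvd c
    set k := c.factorization p with hkdef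
    have hk : 0 < k := hp.factorization_pos_of_dvd (by omega) hpc
    set c' := c / p ^ k with hc'def
    have hcc : p ^ k * c' = c := Nat.ordProj_mul_ordCompl_eq_self c p
    have hpc' : ¬ p ∣ c' := Nat.not_dvd_ordCompl hp (by omega)
    have hc'pos : 0 < c' := Nat.ordCompl_pos p (by omega)
    have hc'lt : c' < c := Nat.div_lt_self hc (Nat.one_lt_pow hk.ne' hp.one_lt)
    -- coprimality helper
    have cop : ∀ (a : ℕ) (x : ℕ), ¬ p ∣ x → Nat.Coprime (p ^ a) x := fun a x hx =>
      Nat.Coprime.pow_left a (hp.coprime_iff_not_dvd.mpr hx)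
    by_cases hpm : p ∣ m
    · have hpn : ¬ p ∣ n := fun h =>
        hp.ne_one (Nat.dvd_one.mp (hmn ▸ Nat.dvd_gcd hpm h))
      set j := m.factorization p with hjdef
      set m' := m / p ^ j with hm'def
      have hmm : p ^ j * m' = m := Nat.ordProj_mul_ordCompl_eq_self m p
      have hpm' : ¬ p ∣ m' := Nat.not_dvd_ordCompl hp (by omega)
      have hm'n : Nat.Coprime m' n := Nat.Coprime.coprime_dvd_left ⟨p ^ j, by rw [← hmm]; ring⟩ hmn
      have e1 : f (c * (m * n)) = f (p ^ (k + j)) * f (c' * (m' * n)) := by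
        rw [show c * (m * n) = p ^ (k + j) * (c' * (m' * n)) by rw [← hcc, ← hmm]; ring]
        exact hf _ _ (cop _ _ (by
          intro h
          rcases (Nat.Prime.dvd_mul hp).mp h with h | h
          · exact hpc' h
          · rcases (Nat.Prime.dvd_mul hp).mp h with h | h
            exacts [hpm' h, hpn h]))
      have e2 : f c = f (p ^ k) * f c' := by
        rw [← hcc]; exact hf _ _ (cop _ _ hpc')
      have e3 : f (c * m) = f (p ^ (k + j)) * f (c' * m') := by
        rw [show c * m = p ^ (k + j) * (c' * m') by rw [← hcc, ← hmm]; ring]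
        exact hf _ _ (cop _ _ (by
          intro h
          rcases (Nat.Prime.dvd_mul hp).mp h with h | h
          exacts [hpc' h, hpm' h]))
      have e4 : f (c * n) = f (p ^ k) * f (c' * n) := by
        rw [show c * n = p ^ k * (c' * n) by rw [← hcc]; ring]
        exact hf _ _ (cop _ _ (by
          intro h
          rcases (Nat.Prime.dvd_mul hp).mp h with h | h
          exacts [hpc' h, hpn h]))
      have ih := IH c' hc'lt hc'pos m' n hm'n
      rw [e1, e2, e3, e4]
      linear_combination (f (p ^ (k + j)) * f (p ^ k)) * ih
    · by_cases hpn : p ∣ n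
      · set j := n.factorization p with hjdef
        set n' := n / p ^ j with hn'def
        have hnn : p ^ j * n' = n := Nat.ordProj_mul_ordCompl_eq_self n p
        have hpn' : ¬ p ∣ n' := Nat.not_dvd_ordCompl hp (by omega)
        have hmn' : Nat.Coprime m n' :=
          Nat.Coprime.coprime_dvd_right ⟨p ^ j, by rw [← hnn]; ring⟩ hmn
        have e1 : f (c * (m * n)) = f (p ^ (k + j)) * f (c' * (m * n')) := by
          rw [show c * (m * n) = p ^ (k + j) * (c' * (m * n')) by rw [← hcc, ← hnn]; ring]
          exact hf _ _ (cop _ _ (by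
            intro h
            rcases (Nat.Prime.dvd_mul hp).mp h with h | h
            · exact hpc' h
            · rcases (Nat.Prime.dvd_mul hp).mp h with h | h
              exacts [hpm h, hpn' h]))
        have e2 : f c = f (p ^ k) * f c' := by
          rw [← hcc]; exact hf _ _ (cop _ _ hpc')
        have e3 : f (c * n) = f (p ^ (k + j)) * f (c' * n') := by
          rw [show c * n = p ^ (k + j) * (c' * n') by rw [← hcc, ← hnn]; ring]
          exact hf _ _ (cop _ _ (by
            intro h
            rcases (Nat.Prime.dvd_mul hp).mp h with h | h
            exacts [hpc' h, hpn' h]))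
        have e4 : f (c * m) = f (p ^ k) * f (c' * m) := by
          rw [show c * m = p ^ k * (c' * m) by rw [← hcc]; ring]
          exact hf _ _ (cop _ _ (by
            intro h
            rcases (Nat.Prime.dvd_mul hp).mp h with h | h
            exacts [hpc' h, hpm h]))
        have ih := IH c' hc'lt hc'pos m n' hmn'
        rw [e1, e2, e3, e4]
        linear_combination (f (p ^ (k + j)) * f (p ^ k)) * ih
      · have e1 : f (c * (m * n)) = f (p ^ k) * f (c' * (m * n)) := by
          rw [show c * (m * n) = p ^ k * (c' * (m * n)) by rw [← hcc]; ring]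
          exact hf _ _ (cop _ _ (by
            intro h
            rcases (Nat.Prime.dvd_mul hp).mp h with h | h
            · exact hpc' h
            · rcases (Nat.Prime.dvd_mul hp).mp h with h | h
              exacts [hpm h, hpn h]))
        have e2 : f c = f (p ^ k) * f c' := by
          rw [← hcc]; exact hf _ _ (cop _ _ hpc')
        have e3 : f (c * m) = f (p ^ k) * f (c' * m) := by
          rw [show c * m = p ^ k * (c' * m) by rw [← hcc]; ring]
          exact hf _ _ (cop _ _ (by
            intro h
            rcases (Nat.Prime.dvd_mul hp).mp h with h | h
            exacts [hpc' h, hpm h]))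
        have e4 : f (c * n) = f (p ^ k) * f (c' * n) := by
          rw [show c * n = p ^ k * (c' * n) by rw [← hcc]; ring]
          exact hf _ _ (cop _ _ (by
            intro h
            rcases (Nat.Prime.dvd_mul hp).mp h with h | h
            exacts [hpc' h, hpn h]))
        have ih := IH c' hc'lt hc'pos m n hmn
        rw [e1, e2, e3, e4]
        linear_combination (f (p ^ k) * f (p ^ k)) * ih

theorem stmt_0 (f : ℕ → ℂ) (hf1 : f 1 = 1)
    (hf : ∀ m n : ℕ, Nat.Coprime m n → f (m * n) = f m * f n)
    (c : ℕ) (hc : 0 < c) (hfc : f c ≠ 0) :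
    (f (c * 1) / f c = 1) ∧
      ∀ m n : ℕ, Nat.Coprime m n →
        f (c * (m * n)) / f c = (f (c * m) / f c) * (f (c * n) / f c) := by
  refine ⟨by rw [mul_one, div_self hfc], fun m n hmn => ?_⟩
  have key := key_aux f hf1 hf c hc m n hmn
  rw [div_mul_div_comm, div_eq_div_iff hfc (mul_ne_zero hfc hfc)]
  linear_combination f c * key
end

section
/- Let p be a prime, k ≥ 1 an integer, and s > 1 a real number. Then 1 + Σ_{ℓ≥1} ((k+1+ℓ)(ℓ+1)/(k+1)) · p^{-ℓs} = (1 - p^{-s})^{-3} · (1 - ((k-1)/(k+1)) p^{-s}). -/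
theorem stmt_5 (p : ℕ) (hp : p.Prime) (k : ℕ) (hk : 1 ≤ k) (s : ℝ) (hs : 1 < s) :
    1 + ∑' ℓ : ℕ,
        (((k : ℝ) + 1 + ((ℓ : ℝ) + 1)) * (((ℓ : ℝ) + 1) + 1) / ((k : ℝ) + 1))
          * (p : ℝ) ^ (-(((ℓ : ℝ) + 1) * s))
      = (1 - (p : ℝ) ^ (-s))⁻¹ ^ 3 * (1 - (((k : ℝ) - 1) / ((k : ℝ) + 1)) * (p : ℝ) ^ (-s)) := by
  have hp1 : (1 : ℝ) < p := by exact_mod_cast hp.one_lt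
  have hp0 : (0 : ℝ) < p := by linarith
  set x : ℝ := (p : ℝ) ^ (-s) with hxdef
  have hx0 : 0 < x := Real.rpow_pos_of_pos hp0 _
  have hx1 : x < 1 := by
    have : (p : ℝ) ^ (-s) < (p : ℝ) ^ (0 : ℝ) :=
      Real.rpow_lt_rpow_left_iff hp1 |>.2 (by linarith)
    simpa using this
  have hnorm : ‖x‖ < 1 := by rw [Real.norm_eq_abs, abs_of_pos hx0]; exact hx1
  have hc : (0 : ℝ) < (k : ℝ) + 1 := by positivity
  have h1 : HasSum (fun n : ℕ ↦ x ^ n) (1 - x)⁻¹ :=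
    hasSum_geometric_of_lt_one hx0.le hx1
  have h2 : HasSum (fun n : ℕ ↦ ((n + 1).choose 1 : ℝ) * x ^ n) (1 / (1 - x) ^ 2) :=
    hasSum_choose_mul_geometric_of_norm_lt_one 1 hnorm
  have h3 : HasSum (fun n : ℕ ↦ ((n + 2).choose 2 : ℝ) * x ^ n) (1 / (1 - x) ^ 3) :=
    hasSum_choose_mul_geometric_of_norm_lt_one 2 hnorm
  have H : HasSum
      (fun ℓ : ℕ ↦
        (((k : ℝ) + 1 + ((ℓ : ℝ) + 1)) * (((ℓ : ℝ) + 1) + 1) / ((k : ℝ) + 1))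
          * (p : ℝ) ^ (-(((ℓ : ℝ) + 1) * s)))
      (x * ((1 / (1 - x) ^ 2 + (1 - x)⁻¹) + (2 / ((k : ℝ) + 1)) * (1 / (1 - x) ^ 3))) := by
    have := (((h2.add h1).add (h3.mul_left (2 / ((k : ℝ) + 1)))).mul_left x)
    convert this using 2 with ℓ
    · rfl
    have hpow : (p : ℝ) ^ (-(((ℓ : ℝ) + 1) * s)) = x ^ (ℓ + 1) := by
      rw [hxdef, ← Real.rpow_natCast ((p : ℝ) ^ (-s)) (ℓ + 1),
        ← Real.rpow_mul hp0.le]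
      push_cast
      ring_nf
    rw [hpow]
    have hch1 : ((ℓ + 1).choose 1 : ℝ) = (ℓ : ℝ) + 1 := by
      rw [Nat.choose_one_right]; push_cast; ring
    have hch2 : ((ℓ + 2).choose 2 : ℝ) = ((ℓ : ℝ) + 2) * ((ℓ : ℝ) + 1) / 2 := by
      rw [Nat.cast_choose_two]; push_cast; ring
    rw [hch1, hch2, pow_succ]
    field_simp
    ring
  rw [H.tsum_eq]
  have h1x : (1 : ℝ) - x ≠ 0 := by linarith
  field_simp
  ring
end

section
/- Let c, d be coprime positive integers and s a real number with s > 1. Then Σ_{n≥1} τ(cn)τ(dn)/n^s = τ(cd) · (ζ(s)⁴/ζ(2s)) · Π_{p^k ∥ cd} (1 + p^{-s})^{-1} (1 - ((k-1)/(k+1)) p^{-s}), where the product runs over primes p with p^k exactly dividing cd. -/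
open Complex ArithmeticFunction
open scoped ArithmeticFunction.zeta ArithmeticFunction.Moebius


private lemma tau_mul_prime_pow {p : ℕ} (hp : p.Prime) {c : ℕ} (hc : c ≠ 0) (e : ℕ) :
    (c * p ^ e).divisors.card
      = ((c / p ^ c.factorization p)).divisors.card * (c.factorization p + e + 1) := by
  have h1 : c * p ^ e = ((c / p ^ c.factorization p)) * p ^ (c.factorization p + e) := by
    rw [pow_add, ← mul_assoc, mul_comm ((c / p ^ c.factorization p)) (p ^ c.factorization p),
      Nat.ordProj_mul_ordCompl_eq_self]
  have hcop : ((c / p ^ c.factorization p)).Coprime (p ^ (c.factorization p + e)) :=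
    ((Nat.coprime_ordCompl hp hc).symm).pow_right _
  rw [h1, hcop.card_divisors_mul]
  congr 1
  have := sigma_zero_apply_prime_pow (p := p) (i := c.factorization p + e) hp
  rwa [sigma_zero_apply] at this

private lemma factorization_zero_or {m n : ℕ} (h : m.Coprime n) (p : ℕ) :
    m.factorization p = 0 ∨ n.factorization p = 0 := by
  by_contra hcon
  push_neg at hcon
  have h1 : p ∣ m := Nat.dvd_of_factorization_pos hcon.1
  have h2 : p ∣ n := Nat.dvd_of_factorization_pos hcon.2
  have := Nat.eq_one_of_dvd_coprimes h h1 h2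
  subst this
  simp [Nat.factorization_one] at hcon

private lemma card_divisors_eq_prod {N : ℕ} (hN : N ≠ 0) {M : ℕ} (hM : M ≠ 0)
    (hdvd : N ∣ M) :
    N.divisors.card = ∏ p ∈ M.primeFactors, (N.factorization p + 1) := by
  rw [Nat.card_divisors hN]
  apply Finset.prod_subset (Nat.primeFactors_mono hdvd hM)
  intro p _ hp
  have : N.factorization p = 0 := by
    rw [← Nat.support_factorization] at hp
    exact Finsupp.notMem_support_iff.mp hp
  simp [this]

private lemma tau_mul_mul {a m n : ℕ} (ha : a ≠ 0) (hm : m ≠ 0) (hn : n ≠ 0)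
    (h : m.Coprime n) :
    (a * (m * n)).divisors.card * a.divisors.card
      = (a * m).divisors.card * (a * n).divisors.card := by
  have hmn : m * n ≠ 0 := Nat.mul_ne_zero hm hn
  have hamn : a * (m * n) ≠ 0 := Nat.mul_ne_zero ha hmn
  rw [card_divisors_eq_prod hamn hamn dvd_rfl,
    card_divisors_eq_prod ha hamn ⟨m * n, rfl⟩,
    card_divisors_eq_prod (Nat.mul_ne_zero ha hm) hamn ⟨n, by ring⟩,
    card_divisors_eq_prod (Nat.mul_ne_zero ha hn) hamn ⟨m, by ring⟩,
    ← Finset.prod_mul_distrib, ← Finset.prod_mul_distrib]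
  apply Finset.prod_congr rfl
  intro p _
  have e1 : (a * (m * n)).factorization p
      = a.factorization p + (m.factorization p + n.factorization p) := by
    rw [Nat.factorization_mul ha hmn, Nat.factorization_mul hm hn]; rfl
  have e2 : (a * m).factorization p = a.factorization p + m.factorization p := by
    rw [Nat.factorization_mul ha hm]; rfl
  have e3 : (a * n).factorization p = a.factorization p + n.factorization p := by
    rw [Nat.factorization_mul ha hn]; rfl
  rw [e1, e2, e3]
  rcases factorization_zero_or h p with h0 | h0 <;> rw [h0] <;> ring

private lemma tau_mul_le {a b : ℕ} (ha : a ≠ 0) (hb : b ≠ 0) :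
    (a * b).divisors.card ≤ a.divisors.card * b.divisors.card := by
  have hab : a * b ≠ 0 := Nat.mul_ne_zero ha hb
  rw [card_divisors_eq_prod hab hab dvd_rfl,
    card_divisors_eq_prod ha hab ⟨b, rfl⟩,
    card_divisors_eq_prod hb hab ⟨a, by ring⟩, ← Finset.prod_mul_distrib]
  apply Finset.prod_le_prod'
  intro p _
  rw [Nat.factorization_mul ha hb]
  show a.factorization p + b.factorization p + 1 ≤ _
  nlinarith [a.factorization p, b.factorization p]


private def d4 : ArithmeticFunction ℕ := ζ * (ζ * (ζ * ζ))

private lemma d4_mult : d4.IsMultiplicative :=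
  isMultiplicative_zeta.mul (isMultiplicative_zeta.mul
    (isMultiplicative_zeta.mul isMultiplicative_zeta))

private lemma sum_range_add_one (m : ℕ) :
    (∑ j ∈ Finset.range m, (j + 1)) * 2 = m * (m + 1) := by
  induction m with
  | zero => simp
  | succ m ih => rw [Finset.sum_range_succ, add_mul, ih]; ring

private lemma zz_pp {p : ℕ} (hp : p.Prime) (j : ℕ) : (ζ * ζ) (p ^ j) = j + 1 := by
  rw [zeta_mul_apply, Nat.sum_divisors_prime_pow hp]
  rw [Finset.sum_congr rfl fun i _ => zeta_apply_ne (pow_ne_zero i hp.pos.ne')]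
  simp

private lemma zzz_pp {p : ℕ} (hp : p.Prime) (i : ℕ) :
    (ζ * (ζ * ζ)) (p ^ i) = ∑ j ∈ Finset.range (i + 1), (j + 1) := by
  rw [zeta_mul_apply, Nat.sum_divisors_prime_pow hp]
  exact Finset.sum_congr rfl fun j _ => zz_pp hp j

private lemma d4_pp {p : ℕ} (hp : p.Prime) (k : ℕ) :
    d4 (p ^ k) = ∑ i ∈ Finset.range (k + 1), ∑ j ∈ Finset.range (i + 1), (j + 1) := by
  rw [d4, zeta_mul_apply, Nat.sum_divisors_prime_pow hp]
  exact Finset.sum_congr rfl fun i _ => zzz_pp hp i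

private lemma sq_le_aux (k : ℕ) :
    (k + 1) ^ 2 * 2 ≤ ∑ i ∈ Finset.range (k + 1), (i + 1) * (i + 2) := by
  induction k with
  | zero => simp
  | succ k ih =>
      rw [Finset.sum_range_succ]
      nlinarith [ih]

private lemma sq_le_d4_pp {p : ℕ} (hp : p.Prime) (k : ℕ) : (k + 1) ^ 2 ≤ d4 (p ^ k) := by
  have h2 : d4 (p ^ k) * 2 = ∑ i ∈ Finset.range (k + 1), (i + 1) * (i + 2) := by
    rw [d4_pp hp, Finset.sum_mul]
    refine Finset.sum_congr rfl fun i _ => ?_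
    rw [sum_range_add_one (i + 1)]
  have := sq_le_aux k
  omega
private lemma tau_sq_le_d4 (n : ℕ) : n.divisors.card ^ 2 ≤ d4 n := by
  induction n using Nat.recOnPosPrimePosCoprime with
  | prime_pow p k hp hk =>
      have ht : (p ^ k).divisors.card = k + 1 := by
        have := sigma_zero_apply_prime_pow (p := p) (i := k) hp
        rwa [sigma_zero_apply] at this
      rw [ht]; exact sq_le_d4_pp hp k
  | zero => simp
  | one => simp [d4_mult.map_one]
  | coprime a b ha hb hab iha ihb =>
      rw [hab.card_divisors_mul, d4_mult.map_mul_of_coprime hab, mul_pow]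
      exact Nat.mul_le_mul iha ihb



private lemma summable_d4 {s : ℝ} (hs : 1 < s) :
    Summable (fun n : ℕ => (d4 n : ℝ) * (n : ℝ) ^ (-s)) := by
  have hsre : 1 < ((s : ℂ)).re := by simpa using hs
  have hz : LSeriesSummable (fun n => ((ζ n : ℕ) : ℂ)) (s : ℂ) :=
    LSeriesSummable_zeta_iff.mpr hsre
  have hcoe : (fun n => ((ζ n : ℕ) : ℂ)) = ⇑((ζ : ArithmeticFunction ℕ) : ArithmeticFunction ℂ) :=
    funext fun n => (natCoe_apply).symm
  rw [hcoe] at hz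
  have h4 : LSeriesSummable (fun n => ((d4 n : ℕ) : ℂ)) (s : ℂ) := by
    have e : (fun n => ((d4 n : ℕ) : ℂ))
        = ⇑((d4 : ArithmeticFunction ℕ) : ArithmeticFunction ℂ) :=
      funext fun n => (natCoe_apply).symm
    have e2 : ((d4 : ArithmeticFunction ℕ) : ArithmeticFunction ℂ)
        = ↑ζ * (↑ζ * ((↑ζ : ArithmeticFunction ℂ) * ↑ζ)) := by
      rw [d4, natCoe_mul, natCoe_mul, natCoe_mul]
    rw [e, e2, ← coe_mul, ← coe_mul, ← coe_mul]
    exact hz.convolution (hz.convolution (hz.convolution hz))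
  have key : (fun n : ℕ => (((d4 n : ℝ) * (n : ℝ) ^ (-s) : ℝ) : ℂ))
      = LSeries.term (fun n => ((d4 n : ℕ) : ℂ)) (s : ℂ) := by
    funext n
    rcases eq_or_ne n 0 with rfl | hn
    · simp [LSeries.term]
    · rw [LSeries.term_of_ne_zero hn]
      rw [Real.rpow_neg (by positivity)]
      push_cast
      rw [Complex.ofReal_cpow (by positivity)]
      push_cast
      rw [div_eq_mul_inv]
  have := h4
  unfold LSeriesSummable at this
  rw [← key] at this
  exact Complex.summable_ofReal.mp this


private lemma one_sub_ne {x : ℂ} (hx : ‖x‖ < 1) : (1 : ℂ) - x ≠ 0 := by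
  intro h
  rw [sub_eq_zero] at h
  rw [← h] at hx
  simp at hx

private lemma one_add_ne {x : ℂ} (hx : ‖x‖ < 1) : (1 : ℂ) + x ≠ 0 := by
  intro h
  have : x = -1 := by linear_combination h
  rw [this] at hx
  simp at hx

private lemma choose_two_mul (e : ℕ) : ((e + 2).choose 2) * 2 = (e + 1) * (e + 2) := by
  rw [Nat.choose_two_right]
  have h2 : 2 ∣ (e + 2) * (e + 2 - 1) := by
    have h := Nat.even_mul_succ_self (e + 1)
    have he : (e + 2) * (e + 2 - 1) = (e + 1) * (e + 1 + 1) := by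
      simp [Nat.succ_sub_one]
      ring
    rw [he]
    exact h.two_dvd
  rw [Nat.div_mul_cancel h2]
  simp [Nat.succ_sub_one]
  ring

private lemma cast_succ_ne {a : ℕ} : (a : ℂ) + 1 ≠ 0 := by
  have h : ((a + 1 : ℕ) : ℂ) ≠ 0 := Nat.cast_ne_zero.mpr (Nat.succ_ne_zero a)
  push_cast at h
  exact h

private lemma hasSum_local {x : ℂ} (hx : ‖x‖ < 1) (a : ℕ) :
    HasSum (fun e : ℕ => (((a : ℂ) + e + 1) * ((e : ℂ) + 1)) * x ^ e)
      (((a : ℂ) + 1 - ((a : ℂ) - 1) * x) / (1 - x) ^ 3) := by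
  have h1x := one_sub_ne hx
  have h1 : HasSum (fun n : ℕ => (((n + 1).choose 1 : ℕ) : ℂ) * x ^ n) (1 / (1 - x) ^ 2) :=
    hasSum_choose_mul_geometric_of_norm_lt_one 1 hx
  have h2 : HasSum (fun n : ℕ => (((n + 2).choose 2 : ℕ) : ℂ) * x ^ n) (1 / (1 - x) ^ 3) :=
    hasSum_choose_mul_geometric_of_norm_lt_one 2 hx
  have h3 := (h2.mul_left 2).add (h1.mul_left ((a : ℂ) - 1))
  have e1 : (fun e : ℕ => (((a : ℂ) + e + 1) * ((e : ℂ) + 1)) * x ^ e)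
      = fun e : ℕ => 2 * ((((e + 2).choose 2 : ℕ) : ℂ) * x ^ e)
          + ((a : ℂ) - 1) * ((((e + 1).choose 1 : ℕ) : ℂ) * x ^ e) := by
    funext e
    have hc2 : (((e + 2).choose 2 : ℕ) : ℂ) * 2 = ((e : ℂ) + 1) * ((e : ℂ) + 2) := by
      exact_mod_cast congrArg (Nat.cast : ℕ → ℂ) (choose_two_mul e)
    rw [Nat.choose_one_right, Nat.cast_add, Nat.cast_one]
    linear_combination (-1 : ℂ) * x ^ e * hc2
  have e2 : ((a : ℂ) + 1 - ((a : ℂ) - 1) * x) / (1 - x) ^ 3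
      = 2 * (1 / (1 - x) ^ 3) + ((a : ℂ) - 1) * (1 / (1 - x) ^ 2) := by
    field_simp
    ring
  rw [e1, e2]
  exact h3

private lemma local_factor_eq {x : ℂ} (hx : ‖x‖ < 1) (a : ℕ) :
    ((a : ℂ) + 1 - ((a : ℂ) - 1) * x) / (1 - x) ^ 3 / ((a : ℂ) + 1)
      = ((1 - x)⁻¹ * (1 - x)⁻¹ * ((1 - x)⁻¹ * (1 - x)⁻¹) * (1 - x ^ 2)) *
        ((1 + x)⁻¹ * (1 - (((a : ℂ) - 1) / ((a : ℂ) + 1)) * x)) := by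
  have h1x := one_sub_ne hx
  have h2x := one_add_ne hx
  have ha : (a : ℂ) + 1 ≠ 0 := cast_succ_ne
  field_simp
  ring


private lemma moebius_eulerProduct {w : ℂ} (hw : 1 < w.re) :
    HasProd (fun p : Nat.Primes => 1 - (p : ℂ) ^ (-w)) (riemannZeta w)⁻¹ := by
  set g : ℕ → ℂ := fun n => (μ n : ℂ) * (n : ℂ) ^ (-w) with hg
  have hg1 : g 1 = 1 := by simp [hg]
  have hgmul : ∀ {m n : ℕ}, m.Coprime n → g (m * n) = g m * g n := by
    intro m n hmn
    simp only [hg]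
    have hmul : ((m : ℂ) * n) ^ (-w) = (m : ℂ) ^ (-w) * (n : ℂ) ^ (-w) := by
      rw [show ((m : ℂ)) = ((m : ℝ) : ℂ) by push_cast; rfl,
        show ((n : ℂ)) = ((n : ℝ) : ℂ) by push_cast; rfl,
        ← mul_cpow_ofReal_nonneg (Nat.cast_nonneg m) (Nat.cast_nonneg n)]
    rw [isMultiplicative_moebius.map_mul_of_coprime hmn]
    push_cast
    rw [hmul]
    ring
  have hg0 : g 0 = 0 := by simp [hg]
  have hsum : Summable (fun n => ‖g n‖) := by
    have hs2 : Summable (fun n : ℕ => (n : ℝ) ^ (-w.re)) :=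
      Real.summable_nat_rpow.mpr (by linarith)
    apply Summable.of_nonneg_of_le (fun n => norm_nonneg _) _ hs2
    intro n
    rcases eq_or_ne n 0 with rfl | hn
    · rw [hg0, norm_zero]
      positivity
    · have hpos : 0 < n := Nat.pos_of_ne_zero hn
      rw [hg, norm_mul, Complex.norm_natCast_cpow_of_pos hpos]
      have h1 : ‖((μ n : ℤ) : ℂ)‖ ≤ 1 := by
        rw [Complex.norm_intCast]
        exact_mod_cast abs_moebius_le_one
      have h2 : (0 : ℝ) ≤ (n : ℝ) ^ (-w).re := Real.rpow_nonneg (Nat.cast_nonneg n) _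
      calc ‖((μ n : ℤ) : ℂ)‖ * (n : ℝ) ^ (-w).re ≤ 1 * (n : ℝ) ^ (-w).re :=
            mul_le_mul_of_nonneg_right h1 h2
        _ = (n : ℝ) ^ (-w.re) := by rw [one_mul]; norm_num
  have H := EulerProduct.eulerProduct_hasProd hg1 hgmul hsum hg0
  have hval : ∑' n, g n = (riemannZeta w)⁻¹ := by
    have hterm : g = LSeries.term (fun n => ((μ n : ℤ) : ℂ)) w := by
      funext n
      rcases eq_or_ne n 0 with rfl | hn
      · rw [hg0]
        simp [LSeries.term]
      · rw [LSeries.term_of_ne_zero hn]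
        show (μ n : ℂ) * (n : ℂ) ^ (-w) = _
        rw [cpow_neg, div_eq_mul_inv]
    have hLz := LSeries_zeta_mul_Lseries_moebius hw
    rw [LSeries_zeta_eq_riemannZeta hw] at hLz
    have hL : LSeries (fun n => ((μ n : ℤ) : ℂ)) w = ∑' n, g n := by
      rw [LSeries, ← hterm]
    rw [hL] at hLz
    exact eq_inv_of_mul_eq_one_left (by rw [mul_comm]; exact hLz)
  have hloc : ∀ p : Nat.Primes, (∑' e : ℕ, g ((p : ℕ) ^ e)) = 1 - (p : ℂ) ^ (-w) := by
    intro p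
    have hp := p.prop
    have hz : ∀ e ∉ ({0, 1} : Finset ℕ), g ((p : ℕ) ^ e) = 0 := by
      intro e he
      simp only [Finset.mem_insert, Finset.mem_singleton] at he
      push_neg at he
      show (μ ((p : ℕ) ^ e) : ℂ) * _ = 0
      rw [moebius_apply_prime_pow hp he.1, if_neg he.2]
      simp
    rw [tsum_eq_sum hz, Finset.sum_insert (by simp), Finset.sum_singleton]
    show (μ ((p : ℕ) ^ 0) : ℂ) * _ + (μ ((p : ℕ) ^ 1) : ℂ) * _ = _
    rw [pow_zero, pow_one, moebius_apply_prime hp, moebius_apply_one]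
    push_cast
    rw [one_cpow]
    ring
  rw [hval] at H
  rw [show (fun p : Nat.Primes => ∑' e : ℕ, g ((p : ℕ) ^ e))
      = fun p : Nat.Primes => 1 - (p : ℂ) ^ (-w) from funext hloc] at H
  exact H


private lemma norm_x_lt {s : ℝ} (hs : 1 < s) {p : ℕ} (hp : 2 ≤ p) :
    ‖(p : ℂ) ^ (-(s : ℂ))‖ < 1 := by
  rw [Complex.norm_natCast_cpow_of_pos (by omega)]
  have : (-(s : ℂ)).re = -s := by simp
  rw [this]
  exact Real.rpow_lt_one_of_one_lt_of_neg (by exact_mod_cast hp.trans_lt' one_lt_two) (by linarith)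

private lemma natpow_cpow {p : ℕ} (hp : 0 < p) (e : ℕ) (t : ℝ) :
    ((p ^ e : ℕ) : ℂ) ^ ((t : ℝ) : ℂ) = ((p : ℂ) ^ ((t : ℝ) : ℂ)) ^ e := by
  have h1 : ((p ^ e : ℕ) : ℂ) = ((((p : ℝ) ^ e : ℝ)) : ℂ) := by push_cast; rfl
  have hppos : (0 : ℝ) < (p : ℝ) := by exact_mod_cast hp
  rw [h1, ← Complex.ofReal_cpow (by positivity) t]
  have h2 : ((p : ℝ) ^ e) ^ t = ((p : ℝ) ^ t) ^ e := by
    rw [← Real.rpow_natCast ((p : ℝ)) e, ← Real.rpow_mul hppos.le, mul_comm,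
      Real.rpow_mul hppos.le, Real.rpow_natCast]
  rw [h2, Complex.ofReal_pow, Complex.ofReal_cpow hppos.le]
  norm_cast

private lemma local_sum {c d : ℕ} (hc : c ≠ 0) (hd : d ≠ 0) (hcd : Nat.Coprime c d)
    {s : ℝ} (hs : 1 < s) {p : ℕ} (hp : p.Prime) :
    ∑' e : ℕ, ((((c * p ^ e).divisors.card * ((d * p ^ e).divisors.card) : ℕ) : ℂ)
        * ((p ^ e : ℕ) : ℂ) ^ (-(s : ℂ)) / (((c * d).divisors.card : ℕ) : ℂ))
      = ((1 - (p : ℂ) ^ (-(s : ℂ)))⁻¹ * (1 - (p : ℂ) ^ (-(s : ℂ)))⁻¹ *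
          ((1 - (p : ℂ) ^ (-(s : ℂ)))⁻¹ * (1 - (p : ℂ) ^ (-(s : ℂ)))⁻¹) *
          (1 - ((p : ℂ) ^ (-(s : ℂ))) ^ 2)) *
        ((1 + (p : ℂ) ^ (-(s : ℂ)))⁻¹ *
          (1 - ((((c * d).factorization p : ℕ) : ℂ) - 1)
              / ((((c * d).factorization p : ℕ) : ℂ) + 1) * (p : ℂ) ^ (-(s : ℂ)))) := by
  have hx : ‖(p : ℂ) ^ (-(s : ℂ))‖ < 1 := norm_x_lt hs hp.two_le
  have hterm : ∀ e : ℕ,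
      ((((c * p ^ e).divisors.card * ((d * p ^ e).divisors.card) : ℕ) : ℂ)
        * ((p ^ e : ℕ) : ℂ) ^ (-(s : ℂ)) / (((c * d).divisors.card : ℕ) : ℂ))
      = (((((c * d).factorization p : ℕ) : ℂ) + e + 1) * ((e : ℂ) + 1))
          * ((p : ℂ) ^ (-(s : ℂ))) ^ e / ((((c * d).factorization p : ℕ) : ℂ) + 1) := by
    intro e
    have hcpow : ((p ^ e : ℕ) : ℂ) ^ (-(s : ℂ)) = ((p : ℂ) ^ (-(s : ℂ))) ^ e := by
      have h := natpow_cpow hp.pos e (-s)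
      rw [show ((-s : ℝ) : ℂ) = -(s : ℂ) by push_cast; ring] at h
      exact h
    have hac := tau_mul_prime_pow hp hc e
    have hac0 := tau_mul_prime_pow hp hc 0
    rw [pow_zero, mul_one] at hac0
    have had := tau_mul_prime_pow hp hd e
    have had0 := tau_mul_prime_pow hp hd 0
    rw [pow_zero, mul_one] at had0
    have hfaccd : (c * d).factorization p = c.factorization p + d.factorization p := by
      rw [Nat.factorization_mul hc hd]; rfl
    have hτcd : (c * d).divisors.card = c.divisors.card * d.divisors.card :=
      hcd.card_divisors_mul
    have htc' : (((c / p ^ c.factorization p).divisors.card : ℕ) : ℂ) ≠ 0 :=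
      Nat.cast_ne_zero.mpr (Finset.card_ne_zero_of_mem
        (Nat.one_mem_divisors.mpr (Nat.ordCompl_pos p hc).ne'))
    have htd' : (((d / p ^ d.factorization p).divisors.card : ℕ) : ℂ) ≠ 0 :=
      Nat.cast_ne_zero.mpr (Finset.card_ne_zero_of_mem
        (Nat.one_mem_divisors.mpr (Nat.ordCompl_pos p hd).ne'))
    have htcN : (c / p ^ c.factorization p).divisors.card ≠ 0 :=
      Finset.card_ne_zero_of_mem (Nat.one_mem_divisors.mpr (Nat.ordCompl_pos p hc).ne')
    have htdN : (d / p ^ d.factorization p).divisors.card ≠ 0 :=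
      Finset.card_ne_zero_of_mem (Nat.one_mem_divisors.mpr (Nat.ordCompl_pos p hd).ne')
    rw [hcpow, hac, had, hτcd, hac0, had0, hfaccd]
    set tc := (c / p ^ c.factorization p).divisors.card with htcdef
    set td := (d / p ^ d.factorization p).divisors.card with htddef
    set vc := c.factorization p with hvcdef
    set vd := d.factorization p with hvddef
    have htcN : tc ≠ 0 :=
      Finset.card_ne_zero_of_mem (Nat.one_mem_divisors.mpr (Nat.ordCompl_pos p hc).ne')
    have htdN : td ≠ 0 :=
      Finset.card_ne_zero_of_mem (Nat.one_mem_divisors.mpr (Nat.ordCompl_pos p hd).ne')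
    have h00 : vc = 0 ∨ vd = 0 := factorization_zero_or hcd p
    rcases h00 with h0 | h0 <;> rw [h0]
    · have hD1 : (((tc * (0 + 0 + 1) * (td * (vd + 0 + 1))) : ℕ) : ℂ) ≠ 0 :=
        Nat.cast_ne_zero.mpr (Nat.mul_ne_zero (Nat.mul_ne_zero htcN (by omega))
          (Nat.mul_ne_zero htdN (by omega)))
      have hD2 : (((0 + vd : ℕ) : ℂ) + 1) ≠ 0 := cast_succ_ne
      rw [div_eq_div_iff hD1 hD2]
      push_cast
      ring
    · have hD1 : (((tc * (vc + 0 + 1) * (td * (0 + 0 + 1))) : ℕ) : ℂ) ≠ 0 :=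
        Nat.cast_ne_zero.mpr (Nat.mul_ne_zero (Nat.mul_ne_zero htcN (by omega))
          (Nat.mul_ne_zero htdN (by omega)))
      have hD2 : (((vc + 0 : ℕ) : ℂ) + 1) ≠ 0 := cast_succ_ne
      rw [div_eq_div_iff hD1 hD2]
      push_cast
      ring
  rw [tsum_congr hterm,
    ((hasSum_local hx ((c * d).factorization p)).div_const
      ((((c * d).factorization p : ℕ) : ℂ) + 1)).tsum_eq]
  exact local_factor_eq hx ((c * d).factorization p)
theorem stmt_6 (c d : ℕ) (hc : 0 < c) (hd : 0 < d) (hcd : Nat.Coprime c d)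
    (s : ℝ) (hs : 1 < s) :
    ∑' n : ℕ, (((c * (n + 1)).divisors.card * ((d * (n + 1)).divisors.card) : ℕ) : ℂ)
        / ((n : ℂ) + 1) ^ (s : ℂ)
      = ((c * d).divisors.card : ℂ) * (riemannZeta s ^ 4 / riemannZeta (2 * s)) *
          ∏ p ∈ (c * d).primeFactors,
            (1 + (p : ℂ) ^ (-(s : ℂ)))⁻¹ *
              (1 - ((((c * d).factorization p : ℂ) - 1) / (((c * d).factorization p : ℂ) + 1))
                * (p : ℂ) ^ (-(s : ℂ))) := by
  classical
  have hsre : 1 < ((s : ℂ)).re := by simpa using hs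
  have hcne : c ≠ 0 := hc.ne'
  have hdne : d ≠ 0 := hd.ne'
  have hcdne : c * d ≠ 0 := Nat.mul_ne_zero hcne hdne
  have htcdN : (c * d).divisors.card ≠ 0 :=
    Finset.card_ne_zero_of_mem (Nat.one_mem_divisors.mpr hcdne)
  have htcd : (((c * d).divisors.card : ℕ) : ℂ) ≠ 0 := Nat.cast_ne_zero.mpr htcdN
  have hsne : -(s : ℂ) ≠ 0 := by
    simp only [ne_eq, neg_eq_zero, Complex.ofReal_eq_zero]
    intro h; rw [h] at hs; linarith
  set f : ℕ → ℂ := fun n =>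
    (((c * n).divisors.card * ((d * n).divisors.card) : ℕ) : ℂ)
      * ((n : ℕ) : ℂ) ^ (-(s : ℂ)) / (((c * d).divisors.card : ℕ) : ℂ) with hfdef
  have hf0 : f 0 = 0 := by
    simp only [hfdef, Nat.cast_zero]
    rw [Complex.zero_cpow hsne, mul_zero, zero_div]
  have hf1 : f 1 = 1 := by
    simp only [hfdef, Nat.cast_one]
    rw [one_cpow, Nat.mul_one, Nat.mul_one, hcd.card_divisors_mul, mul_one]
    exact div_self (by rw [hcd.card_divisors_mul] at htcd; exact htcd)
  have hmulf : ∀ {m n : ℕ}, m.Coprime n → f (m * n) = f m * f n := by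
    intro m n hmn
    rcases eq_or_ne m 0 with rfl | hm
    · rw [zero_mul, hf0, zero_mul]
    rcases eq_or_ne n 0 with rfl | hn
    · rw [mul_zero, hf0, mul_zero]
    have h1 := tau_mul_mul hcne hm hn hmn
    have h2 := tau_mul_mul hdne hm hn hmn
    have key : ((c * (m * n)).divisors.card * (d * (m * n)).divisors.card)
        * (c * d).divisors.card
        = ((c * m).divisors.card * (d * m).divisors.card)
          * ((c * n).divisors.card * (d * n).divisors.card) := by
      rw [hcd.card_divisors_mul]
      calc (c * (m * n)).divisors.card * (d * (m * n)).divisors.card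
            * (c.divisors.card * d.divisors.card)
          = ((c * (m * n)).divisors.card * c.divisors.card)
            * ((d * (m * n)).divisors.card * d.divisors.card) := by ring
        _ = ((c * m).divisors.card * (c * n).divisors.card)
            * ((d * m).divisors.card * (d * n).divisors.card) := by rw [h1, h2]
        _ = _ := by ring
    have hcpowm : ((m : ℂ) * (n : ℂ)) ^ (-(s : ℂ))
        = (m : ℂ) ^ (-(s : ℂ)) * (n : ℂ) ^ (-(s : ℂ)) := by
      rw [show ((m : ℂ)) = ((m : ℝ) : ℂ) by norm_cast,
        show ((n : ℂ)) = ((n : ℝ) : ℂ) by norm_cast,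
        mul_cpow_ofReal_nonneg (Nat.cast_nonneg m) (Nat.cast_nonneg n)]
    have keyC := congrArg (Nat.cast : ℕ → ℂ) key
    push_cast at keyC
    simp only [hfdef]
    push_cast
    rw [hcpowm, div_mul_div_comm, div_eq_div_iff htcd (mul_ne_zero htcd htcd)]
    linear_combination ((m : ℂ) ^ (-(s : ℂ)) * (n : ℂ) ^ (-(s : ℂ))
      * (((c * d).divisors.card : ℕ) : ℂ)) * keyC
  have hsumf : Summable (fun n => ‖f n‖) := by
    have hd4 := summable_d4 hs
    apply Summable.of_nonneg_of_le (fun n => norm_nonneg _) _ hd4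
    intro n
    rcases eq_or_ne n 0 with rfl | hn
    · rw [hf0, norm_zero]
      positivity
    · have hnpos : 0 < n := Nat.pos_of_ne_zero hn
      have hNat : (c * n).divisors.card * (d * n).divisors.card
          ≤ (c * d).divisors.card * d4 n := by
        calc (c * n).divisors.card * (d * n).divisors.card
            ≤ (c.divisors.card * n.divisors.card) * (d.divisors.card * n.divisors.card) :=
              Nat.mul_le_mul (tau_mul_le hcne hn) (tau_mul_le hdne hn)
          _ = (c.divisors.card * d.divisors.card) * n.divisors.card ^ 2 := by ring
          _ = (c * d).divisors.card * n.divisors.card ^ 2 := by rw [hcd.card_divisors_mul]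
          _ ≤ (c * d).divisors.card * d4 n :=
              Nat.mul_le_mul_left _ (tau_sq_le_d4 n)
      have hnormf : ‖f n‖ = (((c * n).divisors.card * (d * n).divisors.card : ℕ) : ℝ)
          * (n : ℝ) ^ (-s) / (((c * d).divisors.card : ℕ) : ℝ) := by
        simp only [hfdef]
        rw [norm_div, norm_mul, Complex.norm_natCast, Complex.norm_natCast,
          Complex.norm_natCast_cpow_of_pos hnpos]
        norm_num
      rw [hnormf, div_le_iff₀ (by exact_mod_cast Nat.pos_of_ne_zero htcdN)]
      calc (((c * n).divisors.card * (d * n).divisors.card : ℕ) : ℝ) * (n : ℝ) ^ (-s)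
          ≤ (((c * d).divisors.card * d4 n : ℕ) : ℝ) * (n : ℝ) ^ (-s) := by
            apply mul_le_mul_of_nonneg_right (by exact_mod_cast hNat)
            positivity
        _ = (d4 n : ℝ) * (n : ℝ) ^ (-s) * (((c * d).divisors.card : ℕ) : ℝ) := by
            push_cast; ring
  have hEuler := EulerProduct.eulerProduct_hasProd hf1 hmulf hsumf hf0
  have hlocal : (fun p : Nat.Primes => ∑' e : ℕ, f ((p : ℕ) ^ e))
      = fun p : Nat.Primes =>
        ((1 - (p : ℂ) ^ (-(s : ℂ)))⁻¹ * (1 - (p : ℂ) ^ (-(s : ℂ)))⁻¹ *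
          ((1 - (p : ℂ) ^ (-(s : ℂ)))⁻¹ * (1 - (p : ℂ) ^ (-(s : ℂ)))⁻¹) *
          (1 - ((p : ℂ) ^ (-(s : ℂ))) ^ 2)) *
        ((1 + (p : ℂ) ^ (-(s : ℂ)))⁻¹ *
          (1 - ((((c * d).factorization (p : ℕ) : ℕ) : ℂ) - 1)
              / ((((c * d).factorization (p : ℕ) : ℕ) : ℂ) + 1) * (p : ℂ) ^ (-(s : ℂ)))) :=
    funext fun p => local_sum hcne hdne hcd hs p.prop
  rw [hlocal] at hEuler
  have hζ := riemannZeta_eulerProduct_hasProd hsre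
  have hζ4 := (hζ.mul hζ).mul (hζ.mul hζ)
  have h2sre : 1 < ((2 * (s : ℂ))).re := by
    simp only [Complex.mul_re, Complex.ofReal_re, Complex.ofReal_im]
    norm_num; linarith
  have hμ := moebius_eulerProduct h2sre
  have hμ' : HasProd (fun p : Nat.Primes => 1 - ((p : ℂ) ^ (-(s : ℂ))) ^ 2)
      (riemannZeta (2 * (s : ℂ)))⁻¹ := by
    have he : (fun p : Nat.Primes => 1 - (p : ℂ) ^ (-(2 * (s : ℂ))))
        = fun p : Nat.Primes => 1 - ((p : ℂ) ^ (-(s : ℂ))) ^ 2 := by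
      funext p
      have hp0 : (p : ℂ) ≠ 0 := Nat.cast_ne_zero.mpr p.prop.pos.ne'
      rw [show -(2 * (s : ℂ)) = -(s : ℂ) + -(s : ℂ) by ring, Complex.cpow_add _ _ hp0, sq]
    rw [← he]
    exact hμ
  set corr : ℕ → ℂ := fun q => (1 + (q : ℂ) ^ (-(s : ℂ)))⁻¹ *
      (1 - ((((c * d).factorization q : ℕ) : ℂ) - 1)
          / ((((c * d).factorization q : ℕ) : ℂ) + 1) * (q : ℂ) ^ (-(s : ℂ))) with hcorrdef
  have hone : ∀ q ∉ (c * d).primeFactors,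
      Set.mulIndicator {q : ℕ | q.Prime} corr q = 1 := by
    intro q hq
    by_cases hqp : q.Prime
    · rw [Set.mulIndicator_of_mem (by exact hqp) corr]
      have hfac : (c * d).factorization q = 0 := by
        rw [Nat.factorization_eq_zero_iff]
        exact Or.inr (Or.inl fun hdvd => hq (Nat.mem_primeFactors.mpr ⟨hqp, hdvd, hcdne⟩))
      have hx : ‖(q : ℂ) ^ (-(s : ℂ))‖ < 1 := norm_x_lt hs hqp.two_le
      simp only [hcorrdef, hfac, Nat.cast_zero]
      have h2 : (1 : ℂ) - ((0 : ℂ) - 1) / ((0 : ℂ) + 1) * (q : ℂ) ^ (-(s : ℂ))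
          = 1 + (q : ℂ) ^ (-(s : ℂ)) := by norm_num
      rw [h2, inv_mul_cancel₀ (one_add_ne hx)]
    · exact Set.mulIndicator_of_notMem hqp corr
  have hind := hasProd_prod_of_ne_finset_one (s := (c * d).primeFactors) (L := SummationFilter.unconditional ℕ) hone
  have hprodval : ∏ p ∈ (c * d).primeFactors, Set.mulIndicator {q : ℕ | q.Prime} corr p
      = ∏ p ∈ (c * d).primeFactors, corr p :=
    Finset.prod_congr rfl fun q hq =>
      Set.mulIndicator_of_mem (Nat.prime_of_mem_primeFactors hq) corr
  rw [hprodval] at hind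
  have hcorrProd : HasProd (fun p : Nat.Primes => corr (p : ℕ))
      (∏ p ∈ (c * d).primeFactors, corr p) :=
    hasProd_subtype_iff_mulIndicator.mpr hind
  have hRHS := (hζ4.mul hμ').mul hcorrProd
  have hval : ∑' n : ℕ, f n
      = (riemannZeta s * riemannZeta s * (riemannZeta s * riemannZeta s)
          * (riemannZeta (2 * (s : ℂ)))⁻¹) * ∏ p ∈ (c * d).primeFactors, corr p :=
    hEuler.unique hRHS
  have hshift : ∀ n : ℕ,
      (((c * (n + 1)).divisors.card * ((d * (n + 1)).divisors.card) : ℕ) : ℂ)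
          / ((n : ℂ) + 1) ^ (s : ℂ)
        = (((c * d).divisors.card : ℕ) : ℂ) * f (n + 1) := by
    intro n
    simp only [hfdef]
    rw [show (((c * d).divisors.card : ℕ) : ℂ) *
        ((((c * (n + 1)).divisors.card * ((d * (n + 1)).divisors.card) : ℕ) : ℂ)
          * (((n + 1 : ℕ) : ℕ) : ℂ) ^ (-(s : ℂ)) / (((c * d).divisors.card : ℕ) : ℂ))
        = (((c * (n + 1)).divisors.card * ((d * (n + 1)).divisors.card) : ℕ) : ℂ)
          * (((n + 1 : ℕ) : ℕ) : ℂ) ^ (-(s : ℂ)) from by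
      rw [mul_comm]; exact div_mul_cancel₀ _ htcd]
    rw [show (((n + 1 : ℕ) : ℕ) : ℂ) = (n : ℂ) + 1 by push_cast; ring]
    rw [cpow_neg, div_eq_mul_inv]
  calc ∑' n : ℕ, (((c * (n + 1)).divisors.card * ((d * (n + 1)).divisors.card) : ℕ) : ℂ)
        / ((n : ℂ) + 1) ^ (s : ℂ)
      = ∑' n : ℕ, (((c * d).divisors.card : ℕ) : ℂ) * f (n + 1) := tsum_congr hshift
    _ = (((c * d).divisors.card : ℕ) : ℂ) * ∑' n : ℕ, f (n + 1) := tsum_mul_left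
    _ = (((c * d).divisors.card : ℕ) : ℂ) * ∑' n : ℕ, f n := by
        rw [Summable.tsum_eq_zero_add hsumf.of_norm, hf0, zero_add]
    _ = _ := by
        rw [hval, hcorrdef]
        rw [div_eq_mul_inv]
        push_cast
        ring
end

section
/- Let φ be a completely multiplicative arithmetic function with 0 < p^{1/4}·φ(p) ≤ 1 for every prime p, and let S be a finite set of positive integers. Then the matrix M with entries M(a,b) = φ(lcm(a,b)/gcd(a,b)) / √(gcd(a,b)), indexed by a, b ∈ S, is positive semidefinite. -/
open Finset ArithmeticFunction

theorem stmt_11 (φ : ℕ → ℝ) (hφ1 : φ 1 = 1)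
    (hφ : ∀ m n : ℕ, φ (m * n) = φ m * φ n)
    (hp : ∀ p : ℕ, p.Prime → 0 < (p : ℝ) ^ ((1:ℝ)/4) * φ p ∧ (p : ℝ) ^ ((1:ℝ)/4) * φ p ≤ 1)
    (S : Finset ℕ) (hS : ∀ a ∈ S, 0 < a) :
    Matrix.PosSemidef
      (fun a b : {x // x ∈ S} =>
        φ (Nat.lcm a.1 b.1 / Nat.gcd a.1 b.1) / Real.sqrt (Nat.gcd a.1 b.1)) := by
  classical
  -- φ is positive at primes
  have hφp : ∀ p : ℕ, p.Prime → 0 < φ p := by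
    intro p hpp
    have hc : 0 < (p : ℝ) ^ ((1:ℝ)/4) :=
      Real.rpow_pos_of_pos (by exact_mod_cast hpp.pos) _
    nlinarith [(hp p hpp).1]
  -- φ is positive on positives
  have hφpos : ∀ n : ℕ, 0 < n → 0 < φ n := by
    intro n
    induction n using Nat.strong_induction_on with
    | _ n ih =>
      intro hn
      rcases eq_or_lt_of_le (Nat.succ_le_of_lt hn) with h1 | h1
      · rw [← h1]; rw [hφ1]; norm_num
      · have hn1 : n ≠ 1 := by omega
        have hpp := Nat.minFac_prime hn1
        have hd : n.minFac ∣ n := Nat.minFac_dvd n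
        have h2 : 2 ≤ n.minFac := hpp.two_le
        have hq : 0 < n / n.minFac := Nat.div_pos (Nat.le_of_dvd (by omega) hd) (by omega)
        have hlt : n / n.minFac < n := Nat.div_lt_self (by omega) (by omega)
        have heq : n = n.minFac * (n / n.minFac) := (Nat.mul_div_cancel' hd).symm
        rw [heq, hφ]
        exact mul_pos (hφp _ hpp) (ih _ hlt hq)
  -- the function f
  set f : ℕ → ℝ := fun n => if n = 0 then 0 else (φ n ^ 2 * Real.sqrt n)⁻¹ with hf_def
  have hf0 : ∀ n : ℕ, 0 < n → f n = (φ n ^ 2 * Real.sqrt n)⁻¹ := by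
    intro n hn; simp [hf_def, Nat.pos_iff_ne_zero.mp hn]
  have hf1 : f 1 = 1 := by simp [hf_def, hφ1]
  have hfmul : ∀ m n : ℕ, 0 < m → 0 < n → f (m * n) = f m * f n := by
    intro m n hm hn
    rw [hf0 _ (Nat.mul_pos hm hn), hf0 _ hm, hf0 _ hn, hφ, ← mul_inv]
    congr 1
    rw [Nat.cast_mul, Real.sqrt_mul (Nat.cast_nonneg m)]
    ring
  have hfpow : ∀ p k : ℕ, 0 < p → f (p ^ k) = f p ^ k := by
    intro p k hp0
    induction k with
    | zero => simpa using hf1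
    | succ k ih => rw [pow_succ, pow_succ, hfmul _ _ (pow_pos hp0 k) hp0, ih]
  -- f p ≥ 1 at primes
  have hfp1 : ∀ p : ℕ, p.Prime → 1 ≤ f p := by
    intro p hpp
    have hppos : (0:ℝ) < p := by exact_mod_cast hpp.pos
    have hc : 0 < (p : ℝ) ^ ((1:ℝ)/4) := Real.rpow_pos_of_pos hppos _
    have hsq : ((p : ℝ) ^ ((1:ℝ)/4)) ^ 2 = Real.sqrt p := by
      rw [Real.sqrt_eq_rpow, ← Real.rpow_natCast ((p:ℝ) ^ ((1:ℝ)/4)) 2,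
        ← Real.rpow_mul hppos.le]
      norm_num
    have hle : φ p ^ 2 * Real.sqrt p ≤ 1 := by
      have h := (hp p hpp).2
      have h1 := (hp p hpp).1
      nlinarith [hsq]
    have hpos : 0 < φ p ^ 2 * Real.sqrt p :=
      mul_pos (pow_pos (hφp p hpp) 2) (Real.sqrt_pos.mpr hppos)
    rw [hf0 _ hpp.pos]
    exact (one_le_inv₀ hpos).mpr hle
  have hfnn : ∀ p : ℕ, p.Prime → 0 ≤ f p := fun p hpp => le_trans zero_le_one (hfp1 p hpp)
  -- arithmetic function versions
  let F : ArithmeticFunction ℝ := ⟨f, by simp [hf_def]⟩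
  have hFapp : ∀ n, F n = f n := fun n => rfl
  have hFmult : F.IsMultiplicative := by
    refine ArithmeticFunction.IsMultiplicative.iff_ne_zero.mpr ⟨hf1, ?_⟩
    intro m n hm hn _
    exact hfmul m n (Nat.pos_of_ne_zero hm) (Nat.pos_of_ne_zero hn)
  let g : ArithmeticFunction ℝ := (↑(ArithmeticFunction.moebius) : ArithmeticFunction ℝ) * F
  have hgmult : g.IsMultiplicative :=
    (ArithmeticFunction.isMultiplicative_moebius.intCast).mul hFmult
  -- Moebius inversion: f n = ∑ d in divisors n, g d
  have hinv : ∀ n : ℕ, f n = ∑ d ∈ n.divisors, g d := by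
    intro n
    have : ((↑(ArithmeticFunction.zeta) : ArithmeticFunction ℝ) * g) = F := by
      show (↑ArithmeticFunction.zeta : ArithmeticFunction ℝ) *
        ((↑ArithmeticFunction.moebius : ArithmeticFunction ℝ) * F) = F
      rw [← mul_assoc, ArithmeticFunction.coe_zeta_mul_coe_moebius, one_mul]
    rw [← hFapp, ← this, ArithmeticFunction.coe_zeta_mul_apply]
  -- g at prime powers
  have hgpk : ∀ p k : ℕ, p.Prime → k ≠ 0 → 0 ≤ g (p ^ k) := by
    intro p k hpp hk
    have hval : g (p ^ k) = f (p ^ k) - f (p ^ (k - 1)) := by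
      show ((↑ArithmeticFunction.moebius : ArithmeticFunction ℝ) * F) (p ^ k) = _
      rw [ArithmeticFunction.mul_apply, Nat.sum_divisorsAntidiagonal
        (fun d e => (↑ArithmeticFunction.moebius : ArithmeticFunction ℝ) d * F e),
        Nat.sum_divisors_prime_pow hpp]
      have hterm : ∀ i : ℕ, i ∈ Finset.range (k + 1) →
          (↑ArithmeticFunction.moebius : ArithmeticFunction ℝ) (p ^ i) * F (p ^ k / p ^ i)
          = (if i = 0 then f (p ^ k) else 0) + (if i = 1 then -f (p ^ (k - 1)) else 0) := by
        intro i hi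
        rcases Nat.eq_zero_or_pos i with rfl | hi0
        · simp [hFapp]
        · rw [Nat.pow_div (by simpa [Nat.lt_succ_iff] using hi) hpp.pos,
            ArithmeticFunction.intCoe_apply,
            ArithmeticFunction.moebius_apply_prime_pow hpp hi0.ne']
          rcases eq_or_ne i 1 with rfl | hi1
          · simp [hFapp]
          · simp [hi1, Nat.pos_iff_ne_zero.mp hi0]
      rw [Finset.sum_congr rfl hterm, Finset.sum_add_distrib,
        Finset.sum_ite_eq' (Finset.range (k + 1)) 0,
        Finset.sum_ite_eq' (Finset.range (k + 1)) 1]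
      have h0 : (0 : ℕ) ∈ Finset.range (k + 1) := by simp
      have h1 : (1 : ℕ) ∈ Finset.range (k + 1) := by simp [Nat.pos_of_ne_zero hk]
      rw [if_pos h0, if_pos h1]
      ring
    rw [hval, hfpow _ _ hpp.pos, hfpow _ _ hpp.pos]
    have h1k : 1 ≤ k := Nat.pos_of_ne_zero hk
    have : f p ^ (k - 1) * 1 ≤ f p ^ (k - 1) * f p := by
      exact mul_le_mul_of_nonneg_left (hfp1 p hpp) (pow_nonneg (hfnn p hpp) _)
    rw [mul_one] at this
    rw [← pow_succ] at this
    have hkk : k - 1 + 1 = k := Nat.succ_pred_eq_of_pos h1k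
    rw [hkk] at this
    linarith
  -- g nonneg
  have hgnn : ∀ n : ℕ, 0 ≤ g n := by
    intro n
    rcases Nat.eq_zero_or_pos n with rfl | hn
    · simp
    rw [ArithmeticFunction.IsMultiplicative.multiplicative_factorization g hgmult hn.ne']
    rw [Finsupp.prod]
    apply Finset.prod_nonneg
    intro p hps
    have hps' : p ∈ n.primeFactors := by rwa [← Nat.support_factorization]
    exact hgpk p _ (Nat.prime_of_mem_primeFactors hps') (Finsupp.mem_support_iff.mp hps)
  -- entry formula
  have hM : ∀ a b : ℕ, 0 < a → 0 < b →
      φ (Nat.lcm a b / Nat.gcd a b) / Real.sqrt (Nat.gcd a b)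
        = (φ a * φ b) * f (Nat.gcd a b) := by
    intro a b ha hb
    have hdpos : 0 < Nat.gcd a b := Nat.gcd_pos_of_pos_left b ha
    have hdl : Nat.gcd a b ∣ Nat.lcm a b :=
      dvd_trans (Nat.gcd_dvd_left a b) (Nat.dvd_lcm_left a b)
    have hab : φ a * φ b
        = φ (Nat.gcd a b) * (φ (Nat.gcd a b) * φ (Nat.lcm a b / Nat.gcd a b)) :=
      calc φ a * φ b = φ (a * b) := (hφ a b).symm
        _ = φ (Nat.gcd a b * Nat.lcm a b) := by rw [Nat.gcd_mul_lcm]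
        _ = φ (Nat.gcd a b) * φ (Nat.lcm a b) := hφ _ _
        _ = φ (Nat.gcd a b) * (φ (Nat.gcd a b) * φ (Nat.lcm a b / Nat.gcd a b)) := by
            have h2 : φ (Nat.lcm a b) = φ (Nat.gcd a b) * φ (Nat.lcm a b / Nat.gcd a b) := by
              conv_lhs => rw [← Nat.mul_div_cancel' hdl]
              exact hφ _ _
            rw [h2]
    rw [hf0 _ hdpos, hab]
    have hφd : 0 < φ (Nat.gcd a b) := hφpos _ hdpos
    have hsd : 0 < Real.sqrt (Nat.gcd a b) := Real.sqrt_pos.mpr (by exact_mod_cast hdpos)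
    field_simp
  set N := S.sup _root_.id + 1 with hN
  have hkey : ∀ a b : ℕ, a ∈ S → b ∈ S →
      f (Nat.gcd a b) = ∑ d ∈ Finset.range N, (if d ∣ a ∧ d ∣ b then g d else 0) := by
    intro a b ha hb
    have ha0 := hS a ha
    have hb0 := hS b hb
    rw [Finset.sum_ite, Finset.sum_const_zero, add_zero]
    have hset : Finset.filter (fun d => d ∣ a ∧ d ∣ b) (Finset.range N)
        = (Nat.gcd a b).divisors := by
      ext d
      simp only [Finset.mem_filter, Finset.mem_range, Nat.mem_divisors, Nat.dvd_gcd_iff]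
      constructor
      · rintro ⟨-, h⟩
        exact ⟨h, (Nat.gcd_pos_of_pos_left b ha0).ne'⟩
      · rintro ⟨h, -⟩
        refine ⟨?_, h⟩
        have hda : d ≤ a := Nat.le_of_dvd ha0 h.1
        have haN : a < N := Nat.lt_succ_of_le (Finset.le_sup (f := _root_.id) ha)
        omega
    rw [hset, hinv]
  refine Matrix.posSemidef_iff_dotProduct_mulVec.mpr ⟨?_, ?_⟩
  · unfold Matrix.IsHermitian
    ext a b
    change star (φ (Nat.lcm b.1 a.1 / Nat.gcd b.1 a.1) / Real.sqrt (Nat.gcd b.1 a.1)) = φ (Nat.lcm a.1 b.1 / Nat.gcd a.1 b.1) / Real.sqrt (Nat.gcd a.1 b.1)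
    rw [star_trivial, Nat.gcd_comm b.1 a.1, Nat.lcm_comm b.1 a.1]
  · intro x
    have e1 : dotProduct (star x) (Matrix.mulVec (fun a b : {x // x ∈ S} =>
        φ (Nat.lcm a.1 b.1 / Nat.gcd a.1 b.1) / Real.sqrt (Nat.gcd a.1 b.1)) x)
        = ∑ a : {x // x ∈ S}, ∑ b : {x // x ∈ S},
            x a * ((φ (Nat.lcm a.1 b.1 / Nat.gcd a.1 b.1) / Real.sqrt (Nat.gcd a.1 b.1)) * x b) := by
      simp [dotProduct, Matrix.mulVec, Finset.mul_sum]
    rw [e1]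
    have e2 : ∀ a b : {x // x ∈ S},
        x a * ((φ (Nat.lcm a.1 b.1 / Nat.gcd a.1 b.1) / Real.sqrt (Nat.gcd a.1 b.1)) * x b)
        = ∑ d ∈ Finset.range N,
            (if d ∣ a.1 ∧ d ∣ b.1 then (x a * φ a.1) * (x b * φ b.1) * g d else 0) := by
      intro a b
      rw [hM a.1 b.1 (hS _ a.2) (hS _ b.2), hkey a.1 b.1 a.2 b.2]
      simp only [Finset.mul_sum, Finset.sum_mul]
      refine Finset.sum_congr rfl fun d _ => ?_
      split_ifs <;> ring
    simp only [e2]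
    have e3 : (∑ a : {x // x ∈ S}, ∑ b : {x // x ∈ S}, ∑ d ∈ Finset.range N,
          (if d ∣ a.1 ∧ d ∣ b.1 then (x a * φ a.1) * (x b * φ b.1) * g d else 0))
        = ∑ d ∈ Finset.range N, ∑ a : {x // x ∈ S}, ∑ b : {x // x ∈ S},
          (if d ∣ a.1 ∧ d ∣ b.1 then (x a * φ a.1) * (x b * φ b.1) * g d else 0) := by
      refine Eq.trans (Finset.sum_congr rfl fun a _ => Finset.sum_comm) ?_
      exact Finset.sum_comm
    rw [e3]
    refine Finset.sum_nonneg fun d _ => ?_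
    have e4 : (∑ a : {x // x ∈ S}, ∑ b : {x // x ∈ S},
          (if d ∣ a.1 ∧ d ∣ b.1 then (x a * φ a.1) * (x b * φ b.1) * g d else 0))
        = g d * (∑ a : {x // x ∈ S}, if d ∣ a.1 then x a * φ a.1 else 0) ^ 2 := by
      rw [sq, Finset.sum_mul_sum, Finset.mul_sum]
      refine Finset.sum_congr rfl fun a _ => ?_
      rw [Finset.mul_sum]
      refine Finset.sum_congr rfl fun b _ => ?_
      by_cases h1 : d ∣ a.1 <;> by_cases h2 : d ∣ b.1 <;> simp [h1, h2] <;> ring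
    rw [e4]
    exact mul_nonneg (hgnn d) (sq_nonneg _)
end

section
/- Let φ be a completely multiplicative arithmetic function with 0 < p^{1/4}·φ(p) < 1 for all primes p, and let S be a finite divisor-closed set of positive integers (every divisor of an element of S lies in S). Then the matrix (φ(lcm(a,b)/gcd(a,b))/√gcd(a,b))_{a,b∈S} is positive definite, and its determinant equals Π_{d∈S} φ(d)²·(μ∗ψ)(d), where ψ is the completely multiplicative function with ψ(p) = 1/(√p·φ(p)²) and μ∗ψ is the Dirichlet convolution of the Möbius function with ψ. -/
open Finset ArithmeticFunction Matrix

theorem stmt_12 (φ : ℕ → ℝ) (hφ1 : φ 1 = 1)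
    (hφ : ∀ m n : ℕ, φ (m * n) = φ m * φ n)
    (hp : ∀ p : ℕ, p.Prime → 0 < (p : ℝ) ^ ((1:ℝ)/4) * φ p ∧ (p : ℝ) ^ ((1:ℝ)/4) * φ p < 1)
    (S : Finset ℕ) (hS : ∀ a ∈ S, 0 < a)
    (hSdc : ∀ a ∈ S, ∀ d : ℕ, d ∣ a → d ∈ S)
    (ψ : ℕ → ℝ) (hψ1 : ψ 1 = 1) (hψ : ∀ m n : ℕ, ψ (m * n) = ψ m * ψ n)
    (hψp : ∀ p : ℕ, p.Prime → ψ p = 1 / (Real.sqrt p * φ p ^ 2)) :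
    Matrix.PosDef
      (fun a b : {x // x ∈ S} =>
        φ (Nat.lcm a.1 b.1 / Nat.gcd a.1 b.1) / Real.sqrt (Nat.gcd a.1 b.1)) ∧
    Matrix.det
      (fun a b : {x // x ∈ S} =>
        φ (Nat.lcm a.1 b.1 / Nat.gcd a.1 b.1) / Real.sqrt (Nat.gcd a.1 b.1))
      = ∏ d ∈ S.attach, φ d.1 ^ 2 *
          ∑ e ∈ (d.1).divisors, ((ArithmeticFunction.moebius e : ℤ) : ℝ) * ψ (d.1 / e) := by
  classical
  -- φ is positive at primes
  have hφp : ∀ p : ℕ, p.Prime → 0 < φ p := by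
    intro p pp
    have h := (hp p pp).1
    have h4 : (0:ℝ) < (p : ℝ) ^ ((1:ℝ)/4) :=
      Real.rpow_pos_of_pos (by exact_mod_cast pp.pos) _
    nlinarith
  -- φ is positive everywhere (on positive naturals)
  have hφpos : ∀ n : ℕ, n ≠ 0 → 0 < φ n := by
    intro n
    induction n using Nat.recOnMul with
    | zero => intro h; exact absurd rfl h
    | one => intro _; simp [hφ1]
    | prime p pp => intro _; exact hφp p pp
    | mul a b ha hb =>
      intro hab
      have ha0 : a ≠ 0 := fun h => hab (by simp [h])
      have hb0 : b ≠ 0 := fun h => hab (by simp [h])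
      rw [hφ]; exact mul_pos (ha ha0) (hb hb0)
  -- the basic identity ψ n * (√n * φ n ^ 2) = 1
  have hψval : ∀ n : ℕ, n ≠ 0 → ψ n * (Real.sqrt n * φ n ^ 2) = 1 := by
    intro n
    induction n using Nat.recOnMul with
    | zero => intro h; exact absurd rfl h
    | one => intro _; simp [hψ1, hφ1]
    | prime p pp =>
      intro _
      have hps : (0:ℝ) < Real.sqrt p := Real.sqrt_pos.mpr (by exact_mod_cast pp.pos)
      have hpφ : 0 < φ p := hφp p pp
      rw [hψp p pp]
      field_simp
    | mul a b ha hb =>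
      intro hab
      have ha0 : a ≠ 0 := fun h => hab (by simp [h])
      have hb0 : b ≠ 0 := fun h => hab (by simp [h])
      have hs : Real.sqrt ((a * b : ℕ) : ℝ) = Real.sqrt a * Real.sqrt b := by
        rw [Nat.cast_mul, Real.sqrt_mul (by positivity)]
      rw [hψ, hφ, hs]
      linear_combination (ψ b * Real.sqrt b * φ b ^ 2) * (ha ha0) + hb hb0
  have hψpos : ∀ n : ℕ, n ≠ 0 → 0 < ψ n := by
    intro n hn
    have h := hψval n hn
    have hn' : 0 < n := Nat.pos_of_ne_zero hn
    have ht : 0 < Real.sqrt n * φ n ^ 2 := by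
      apply mul_pos (Real.sqrt_pos.mpr (by exact_mod_cast hn'))
      exact pow_pos (hφpos n hn) 2
    nlinarith
  -- ψ is larger than 1 at primes
  have hψp1 : ∀ p : ℕ, p.Prime → 1 < ψ p := by
    intro p pp
    obtain ⟨h1, h2⟩ := hp p pp
    have hp0 : (0:ℝ) < (p : ℝ) := by exact_mod_cast pp.pos
    have hsq : Real.sqrt p * φ p ^ 2 = ((p : ℝ) ^ ((1:ℝ)/4) * φ p) ^ 2 := by
      have h14 : ((p : ℝ) ^ ((1:ℝ)/4)) ^ 2 = Real.sqrt p := by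
        rw [show ((p : ℝ) ^ ((1:ℝ)/4)) ^ 2 = (p : ℝ) ^ ((1:ℝ)/4) * (p : ℝ) ^ ((1:ℝ)/4) by ring,
          ← Real.rpow_add hp0, Real.sqrt_eq_rpow]
        norm_num
      rw [← h14]; ring
    have ht2 : ((p : ℝ) ^ ((1:ℝ)/4) * φ p) ^ 2 < 1 := by nlinarith
    have ht2' : 0 < ((p : ℝ) ^ ((1:ℝ)/4) * φ p) ^ 2 := by positivity
    rw [hψp p pp, hsq]
    exact one_lt_one_div ht2' ht2
  have hψpow : ∀ p k : ℕ, ψ (p ^ k) = ψ p ^ k := by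
    intro p k
    induction k with
    | zero => simpa using hψ1
    | succ k ih => rw [pow_succ, hψ, ih, pow_succ]
  -- the arithmetic function Ψ
  set Ψ : ArithmeticFunction ℝ := ⟨fun n => if n = 0 then 0 else ψ n, if_pos rfl⟩ with hΨdef
  have hΨapp : ∀ n : ℕ, n ≠ 0 → Ψ n = ψ n := by
    intro n hn
    show (if n = 0 then 0 else ψ n) = ψ n
    rw [if_neg hn]
  have hΨmult : Ψ.IsMultiplicative := by
    rw [ArithmeticFunction.IsMultiplicative.iff_ne_zero]
    constructor
    · rw [hΨapp 1 one_ne_zero, hψ1]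
    · intro m n hm hn _
      rw [hΨapp _ (mul_ne_zero hm hn), hΨapp _ hm, hΨapp _ hn, hψ]
  set F : ArithmeticFunction ℝ :=
    ((ArithmeticFunction.moebius : ArithmeticFunction ℤ) : ArithmeticFunction ℝ) * Ψ with hFdef
  have hFmult : F.IsMultiplicative :=
    ArithmeticFunction.isMultiplicative_moebius.intCast.mul hΨmult
  -- g
  set g : ℕ → ℝ := fun d =>
    ∑ e ∈ d.divisors, ((ArithmeticFunction.moebius e : ℤ) : ℝ) * ψ (d / e) with hgdef
  have hgF : ∀ n : ℕ, n ≠ 0 → g n = F n := by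
    intro n hn
    rw [hFdef, ArithmeticFunction.mul_apply,
      Nat.sum_divisorsAntidiagonal
        (fun a b => ((ArithmeticFunction.moebius : ArithmeticFunction ℤ) :
          ArithmeticFunction ℝ) a * Ψ b)]
    rw [hgdef]
    apply Finset.sum_congr rfl
    intro e he
    have hend : n / e ≠ 0 := by
      have := Nat.div_pos (Nat.le_of_dvd (Nat.pos_of_ne_zero hn) (Nat.mem_divisors.mp he).1)
        (Nat.pos_of_mem_divisors he)
      omega
    rw [ArithmeticFunction.intCoe_apply, hΨapp _ hend]
  -- value of F at prime powers
  have hFpp : ∀ p k : ℕ, p.Prime → k ≠ 0 → F (p ^ k) = ψ p ^ k - ψ p ^ (k - 1) := by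
    intro p k pp hk
    rw [hFdef, ArithmeticFunction.mul_apply,
      Nat.sum_divisorsAntidiagonal
        (fun a b => ((ArithmeticFunction.moebius : ArithmeticFunction ℤ) :
          ArithmeticFunction ℝ) a * Ψ b),
      Nat.sum_divisors_prime_pow pp]
    have hterm : ∀ x ∈ Finset.range (k + 1),
        ((ArithmeticFunction.moebius : ArithmeticFunction ℤ) : ArithmeticFunction ℝ) (p ^ x) *
          Ψ (p ^ k / p ^ x)
        = (if x = 0 then ψ p ^ k else 0) + (if x = 1 then -(ψ p ^ (k - 1)) else 0) := by
      intro x hx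
      have hxk : x ≤ k := Nat.lt_succ_iff.mp (Finset.mem_range.mp hx)
      have hdiv : p ^ k / p ^ x = p ^ (k - x) := Nat.pow_div hxk pp.pos
      have hΨv : Ψ (p ^ k / p ^ x) = ψ p ^ (k - x) := by
        rw [hdiv, hΨapp _ (pow_ne_zero _ pp.pos.ne'), hψpow]
      rw [ArithmeticFunction.intCoe_apply, hΨv]
      match x with
      | 0 => simp
      | 1 => simp [ArithmeticFunction.moebius_apply_prime pp]
      | (n + 2) =>
        rw [ArithmeticFunction.moebius_apply_prime_pow pp (by omega)]
        simp
    rw [Finset.sum_congr rfl hterm, Finset.sum_add_distrib,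
      Finset.sum_ite_eq' (Finset.range (k + 1)) (0 : ℕ) (fun _ => ψ p ^ k),
      Finset.sum_ite_eq' (Finset.range (k + 1)) (1 : ℕ) (fun _ => -(ψ p ^ (k - 1))),
      if_pos (Finset.mem_range.mpr (by omega)), if_pos (Finset.mem_range.mpr (by omega))]
    ring
  -- positivity of g
  have hgpos : ∀ n : ℕ, n ≠ 0 → 0 < g n := by
    intro n hn
    rw [hgF n hn, hFmult.multiplicative_factorization F hn, Finsupp.prod]
    apply Finset.prod_pos
    intro p hps
    have pps : p.Prime := Nat.prime_of_mem_primeFactors (by rwa [Nat.support_factorization] at hps)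
    have hk : n.factorization p ≠ 0 := Finsupp.mem_support_iff.mp hps
    rw [hFpp p _ pps hk]
    have h1 : 1 < ψ p := hψp1 p pps
    have : ψ p ^ (n.factorization p - 1) < ψ p ^ (n.factorization p) := by
      apply pow_lt_pow_right₀ h1
      omega
    linarith
  -- Möbius inversion: ∑_{d ∣ n} g d = ψ n
  have hsum : ∀ n > 0, ∑ i ∈ n.divisors, g i = ψ n := by
    apply (ArithmeticFunction.sum_eq_iff_sum_mul_moebius_eq (f := g) (g := ψ)).mpr
    intro n hn
    rw [Nat.sum_divisorsAntidiagonal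
      (fun a b => ((ArithmeticFunction.moebius a : ℤ) : ℝ) * ψ b)]
  -- the matrix N
  set ι := {x // x ∈ S}
  set M : Matrix ι ι ℝ := fun a b : ι =>
    φ (Nat.lcm a.1 b.1 / Nat.gcd a.1 b.1) / Real.sqrt (Nat.gcd a.1 b.1) with hMdef
  set N : Matrix ι ι ℝ := fun a d : ι =>
    if d.1 ∣ a.1 then φ a.1 * Real.sqrt (g d.1) else 0 with hNdef
  -- each entry of M
  have hMentry : ∀ a b : ι, M a b = φ a.1 * φ b.1 * ψ (Nat.gcd a.1 b.1) := by
    intro a b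
    have ha : 0 < a.1 := hS a.1 a.2
    have hb : 0 < b.1 := hS b.1 b.2
    have hg0 : 0 < Nat.gcd a.1 b.1 := Nat.gcd_pos_of_pos_left _ ha
    have hdl : Nat.gcd a.1 b.1 ∣ Nat.lcm a.1 b.1 :=
      (Nat.gcd_dvd_left a.1 b.1).trans (Nat.dvd_lcm_left a.1 b.1)
    have h1 : φ (Nat.lcm a.1 b.1 / Nat.gcd a.1 b.1) * φ (Nat.gcd a.1 b.1) = φ (Nat.lcm a.1 b.1) := by
      rw [← hφ, Nat.div_mul_cancel hdl]
    have h2 : φ (Nat.gcd a.1 b.1) * φ (Nat.lcm a.1 b.1) = φ a.1 * φ b.1 := by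
      rw [← hφ, Nat.gcd_mul_lcm, hφ]
    have h3 := hψval (Nat.gcd a.1 b.1) hg0.ne'
    have hsq : (0:ℝ) < Real.sqrt (Nat.gcd a.1 b.1) := Real.sqrt_pos.mpr (by exact_mod_cast hg0)
    rw [hMdef]
    show φ (Nat.lcm a.1 b.1 / Nat.gcd a.1 b.1) / Real.sqrt (Nat.gcd a.1 b.1)
      = φ a.1 * φ b.1 * ψ (Nat.gcd a.1 b.1)
    rw [div_eq_iff hsq.ne']
    linear_combination (ψ (Nat.gcd a.1 b.1) * Real.sqrt (Nat.gcd a.1 b.1) *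
        φ (Nat.gcd a.1 b.1)) * h1 +
      (ψ (Nat.gcd a.1 b.1) * Real.sqrt (Nat.gcd a.1 b.1)) * h2 +
      (-(φ (Nat.lcm a.1 b.1 / Nat.gcd a.1 b.1))) * h3
  -- factorization M = N * Nᵀ
  have hNfact : M = N * N.transpose := by
    ext a b
    rw [Matrix.mul_apply]
    simp only [Matrix.transpose_apply]
    have step1 : ∀ d : ι, N a d * N b d
        = (fun d' : ℕ => if d' ∣ a.1 ∧ d' ∣ b.1 then φ a.1 * φ b.1 * g d' else 0) d.1 := by
      intro d
      have hd0 : d.1 ≠ 0 := (hS d.1 d.2).ne'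
      rw [hNdef]
      show (if d.1 ∣ a.1 then φ a.1 * Real.sqrt (g d.1) else 0) *
        (if d.1 ∣ b.1 then φ b.1 * Real.sqrt (g d.1) else 0)
        = if d.1 ∣ a.1 ∧ d.1 ∣ b.1 then φ a.1 * φ b.1 * g d.1 else 0
      by_cases h1 : d.1 ∣ a.1 <;> by_cases h2 : d.1 ∣ b.1
      · rw [if_pos h1, if_pos h2, if_pos (show d.1 ∣ a.1 ∧ d.1 ∣ b.1 from ⟨h1, h2⟩),
          show φ a.1 * Real.sqrt (g d.1) * (φ b.1 * Real.sqrt (g d.1))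
            = φ a.1 * φ b.1 * (Real.sqrt (g d.1) * Real.sqrt (g d.1)) by ring,
          Real.mul_self_sqrt (hgpos d.1 hd0).le]
      · simp [h1, h2]
      · simp [h1, h2]
      · simp [h1, h2]
    rw [Finset.sum_congr rfl (fun d _ => step1 d)]
    rw [Finset.univ_eq_attach, Finset.sum_attach S
      (fun d' : ℕ => if d' ∣ a.1 ∧ d' ∣ b.1 then φ a.1 * φ b.1 * g d' else 0)]
    rw [← Finset.sum_filter]
    have hfe : S.filter (fun d' => d' ∣ a.1 ∧ d' ∣ b.1) = (Nat.gcd a.1 b.1).divisors := by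
      ext d'
      simp only [Finset.mem_filter, Nat.mem_divisors]
      constructor
      · rintro ⟨_, hda, hdb⟩
        exact ⟨Nat.dvd_gcd hda hdb, (Nat.gcd_pos_of_pos_left _ (hS a.1 a.2)).ne'⟩
      · rintro ⟨hd, -⟩
        have hda := hd.trans (Nat.gcd_dvd_left _ _)
        have hdb := hd.trans (Nat.gcd_dvd_right _ _)
        exact ⟨hSdc a.1 a.2 d' hda, hda, hdb⟩
    rw [hfe, ← Finset.mul_sum, hsum _ (Nat.gcd_pos_of_pos_left _ (hS a.1 a.2)), hMentry a b]
  -- N is lower triangular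
  have htri : N.BlockTriangular OrderDual.toDual := by
    intro i j hij
    have hij' : i.1 < j.1 := Subtype.coe_lt_coe.mpr (OrderDual.toDual_lt_toDual.mp hij)
    have hnd : ¬ (j.1 ∣ i.1) := fun hdvd =>
      absurd (Nat.le_of_dvd (hS i.1 i.2) hdvd) (not_le.mpr hij')
    rw [hNdef]
    show (if j.1 ∣ i.1 then φ i.1 * Real.sqrt (g j.1) else 0) = 0
    rw [if_neg hnd]
  have hNdet : N.det = ∏ i : ι, (φ i.1 * Real.sqrt (g i.1)) := by
    rw [Matrix.det_of_lowerTriangular N htri]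
    apply Finset.prod_congr rfl
    intro i _
    rw [hNdef]
    show (if i.1 ∣ i.1 then φ i.1 * Real.sqrt (g i.1) else 0) = _
    rw [if_pos dvd_rfl]
  have hdet : M.det = ∏ i : ι, (φ i.1 ^ 2 * g i.1) := by
    rw [hNfact, Matrix.det_mul, Matrix.det_transpose, hNdet, ← Finset.prod_mul_distrib]
    apply Finset.prod_congr rfl
    intro i _
    rw [show φ i.1 * Real.sqrt (g i.1) * (φ i.1 * Real.sqrt (g i.1))
        = φ i.1 ^ 2 * (Real.sqrt (g i.1) * Real.sqrt (g i.1)) by ring,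
      Real.mul_self_sqrt (hgpos i.1 (hS i.1 i.2).ne').le]
  have hdetpos : 0 < M.det := by
    rw [hdet]
    apply Finset.prod_pos
    intro i _
    exact mul_pos (pow_pos (hφpos _ (hS _ i.2).ne') 2) (hgpos _ (hS _ i.2).ne')
  have hMps : M.PosSemidef := by
    rw [hNfact, ← Matrix.conjTranspose_eq_transpose_of_trivial N]
    exact Matrix.posSemidef_self_mul_conjTranspose N
  constructor
  · refine Matrix.PosDef.of_dotProduct_mulVec_pos hMps.1 (fun ⦃x⦄ hx => ?_)
    rcases (hMps.dotProduct_mulVec_nonneg x).lt_or_eq with h | h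
    · exact h
    · exfalso
      have hMx : M *ᵥ x = 0 := (hMps.dotProduct_mulVec_zero_iff x).mp h.symm
      have hunit : IsUnit M :=
        (Matrix.isUnit_iff_isUnit_det M).mpr (isUnit_iff_ne_zero.mpr hdetpos.ne')
      have hinj := Matrix.mulVec_injective_iff_isUnit.mpr hunit
      exact hx (hinj (show M *ᵥ x = M *ᵥ 0 by simp [hMx]))
  · rw [hdet, Finset.univ_eq_attach]
end

section
/- Let φ be a multiplicative arithmetic function with 0 < p^{1/4}·φ(p) ≤ 1 for all primes p, and let S be a finite set of squarefree positive integers. Then the matrix (φ(lcm(a,b)/gcd(a,b))/√gcd(a,b))_{a,b∈S} is positive semidefinite. -/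
open Finset

private lemma phi_prod_primes (φ : ℕ → ℝ) (hφ1 : φ 1 = 1)
    (hφ : ∀ m n : ℕ, Nat.Coprime m n → φ (m * n) = φ m * φ n) :
    ∀ t : Finset ℕ, (∀ p ∈ t, Nat.Prime p) → φ (∏ p ∈ t, p) = ∏ p ∈ t, φ p := by
  intro t
  induction t using Finset.induction_on with
  | empty => simp [hφ1]
  | @insert q s hx ih =>
    intro hprime
    have hq : Nat.Prime q := hprime q (Finset.mem_insert_self _ _)
    have hcop : Nat.Coprime q (∏ p ∈ s, p) := by
      apply Nat.Coprime.prod_right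
      intro p hp
      exact (Nat.coprime_primes hq (hprime p (Finset.mem_insert_of_mem hp))).mpr
        (by rintro rfl; exact hx hp)
    rw [Finset.prod_insert hx, Finset.prod_insert hx, hφ _ _ hcop,
      ih (fun p hp => hprime p (Finset.mem_insert_of_mem hp))]

private lemma phi_squarefree (φ : ℕ → ℝ) (hφ1 : φ 1 = 1)
    (hφ : ∀ m n : ℕ, Nat.Coprime m n → φ (m * n) = φ m * φ n)
    {n : ℕ} (hn : Squarefree n) : φ n = ∏ p ∈ n.primeFactors, φ p := by
  conv_lhs => rw [← Nat.prod_primeFactors_of_squarefree hn]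
  exact phi_prod_primes φ hφ1 hφ _ (fun p hp => Nat.prime_of_mem_primeFactors hp)

private lemma sqrt_prod_nat (t : Finset ℕ) :
    Real.sqrt (∏ p ∈ t, (p : ℝ)) = ∏ p ∈ t, Real.sqrt p := by
  induction t using Finset.induction_on with
  | empty => simp
  | @insert q s hx ih =>
    rw [Finset.prod_insert hx, Finset.prod_insert hx,
      Real.sqrt_mul (by positivity), ih]

private lemma key_identity (w : ℕ → ℝ) {g : ℕ} (hg : Squarefree g) :
    ∑ d ∈ g.divisors, ∏ p ∈ d.primeFactors, w p
      = ∏ p ∈ g.primeFactors, (w p + 1) := by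
  rw [Finset.prod_add]
  simp only [Finset.prod_const_one, mul_one]
  refine Finset.sum_nbij' (fun d => d.primeFactors) (fun t => ∏ p ∈ t, p)
    ?_ ?_ ?_ ?_ ?_
  · intro d hd
    rw [Finset.mem_powerset]
    exact Nat.primeFactors_mono (Nat.dvd_of_mem_divisors hd) hg.ne_zero
  · intro t ht
    rw [Finset.mem_powerset] at ht
    rw [Nat.mem_divisors]
    refine ⟨?_, hg.ne_zero⟩
    calc ∏ p ∈ t, p ∣ ∏ p ∈ g.primeFactors, p :=
          Finset.prod_dvd_prod_of_subset _ _ _ ht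
      _ = g := Nat.prod_primeFactors_of_squarefree hg
  · intro d hd
    exact Nat.prod_primeFactors_of_squarefree
      (hg.squarefree_of_dvd (Nat.dvd_of_mem_divisors hd))
  · intro t ht
    rw [Finset.mem_powerset] at ht
    exact Nat.primeFactors_prod (fun p hp => Nat.prime_of_mem_primeFactors (ht hp))
  · intro d hd; rfl

theorem stmt_13 (φ : ℕ → ℝ) (hφ1 : φ 1 = 1)
    (hφ : ∀ m n : ℕ, Nat.Coprime m n → φ (m * n) = φ m * φ n)
    (hp : ∀ p : ℕ, p.Prime → 0 < (p : ℝ) ^ ((1:ℝ)/4) * φ p ∧ (p : ℝ) ^ ((1:ℝ)/4) * φ p ≤ 1)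
    (S : Finset ℕ) (hS : ∀ a ∈ S, 0 < a) (hSsf : ∀ a ∈ S, Squarefree a) :
    Matrix.PosSemidef
      (fun a b : {x // x ∈ S} =>
        φ (Nat.lcm a.1 b.1 / Nat.gcd a.1 b.1) / Real.sqrt (Nat.gcd a.1 b.1)) := by
  classical
  have hφp : ∀ p : ℕ, p.Prime → 0 < φ p := by
    intro p hpp
    have h1 := (hp p hpp).1
    have hr : (0:ℝ) < (p : ℝ) ^ ((1:ℝ)/4) :=
      Real.rpow_pos_of_pos (by exact_mod_cast hpp.pos) _
    nlinarith
  have hsq : ∀ p : ℕ, p.Prime → (φ p)^2 * Real.sqrt p ≤ 1 := by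
    intro p hpp
    have h1 := (hp p hpp).1
    have h2 := (hp p hpp).2
    have hple : ((p : ℝ) ^ ((1:ℝ)/4) * φ p)^2 ≤ 1 := by nlinarith
    have hr2 : ((p : ℝ) ^ ((1:ℝ)/4))^2 = Real.sqrt p := by
      rw [← Real.rpow_natCast ((p:ℝ) ^ ((1:ℝ)/4)) 2, ← Real.rpow_mul (by positivity),
        Real.sqrt_eq_rpow]
      norm_num
    calc (φ p)^2 * Real.sqrt p = ((p : ℝ) ^ ((1:ℝ)/4) * φ p)^2 := by
          rw [mul_pow, hr2]; ring
      _ ≤ 1 := hple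
  have hsqpos : ∀ p : ℕ, p.Prime → 0 < (φ p)^2 * Real.sqrt p := by
    intro p hpp
    have h1 := hφp p hpp
    have h2 : (0:ℝ) < Real.sqrt p := Real.sqrt_pos.mpr (by exact_mod_cast hpp.pos)
    positivity
  set w : ℕ → ℝ := fun p => 1 / ((φ p)^2 * Real.sqrt p) - 1 with hw
  have hwnn : ∀ p : ℕ, p.Prime → 0 ≤ w p := by
    intro p hpp
    have h1 := hsq p hpp
    have h2 := hsqpos p hpp
    have h3 : (1:ℝ) ≤ 1 / ((φ p)^2 * Real.sqrt p) := by
      rw [le_div_iff₀ h2]; linarith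
    simp only [hw]; linarith
  set c : ℕ → ℝ := fun n => ∏ p ∈ n.primeFactors, w p with hc
  have hcnn : ∀ n : ℕ, Squarefree n → 0 ≤ c n := by
    intro n hn
    exact Finset.prod_nonneg (fun p hp => hwnn p (Nat.prime_of_mem_primeFactors hp))
  set D : Finset ℕ := S.biUnion Nat.divisors with hD
  have hDsf : ∀ d ∈ D, Squarefree d := by
    intro d hd
    rw [hD, Finset.mem_biUnion] at hd
    obtain ⟨a, ha, hda⟩ := hd
    exact (hSsf a ha).squarefree_of_dvd (Nat.dvd_of_mem_divisors hda)
  set B : Matrix {d // d ∈ D} {x // x ∈ S} ℝ :=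
    fun d a => if d.1 ∣ a.1 then Real.sqrt (c d.1) * φ a.1 else 0 with hB
  set M : Matrix {x // x ∈ S} {x // x ∈ S} ℝ := B.conjTranspose * B with hM
  have hmain : (fun a b : {x // x ∈ S} =>
      φ (Nat.lcm a.1 b.1 / Nat.gcd a.1 b.1) / Real.sqrt (Nat.gcd a.1 b.1)) = M := by
    funext a b
    obtain ⟨a, haS⟩ := a
    obtain ⟨b, hbS⟩ := b
    have ha0 : 0 < a := hS a haS
    have hb0 : 0 < b := hS b hbS
    have hasf : Squarefree a := hSsf a haS
    have hbsf : Squarefree b := hSsf b hbS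
    set g : ℕ := Nat.gcd a b with hg
    have hg0 : 0 < g := Nat.gcd_pos_of_pos_left b ha0
    have hgsf : Squarefree g := hasf.squarefree_of_dvd (Nat.gcd_dvd_left a b)
    have hφg : 0 < φ g := by
      rw [phi_squarefree φ hφ1 hφ hgsf]
      exact Finset.prod_pos (fun p hp => hφp p (Nat.prime_of_mem_primeFactors hp))
    have hsg : (0:ℝ) < Real.sqrt g := Real.sqrt_pos.mpr (by exact_mod_cast hg0)
    -- entry of B.conjTranspose * B
    have hrhs : M ⟨a, haS⟩ ⟨b, hbS⟩
        = (φ a * φ b) * ∑ d ∈ g.divisors, c d := by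
      have step1 : M ⟨a, haS⟩ ⟨b, hbS⟩
          = ∑ d ∈ D, (if d ∣ a then Real.sqrt (c d) * φ a else 0)
              * (if d ∣ b then Real.sqrt (c d) * φ b else 0) := by
        rw [hM, Matrix.mul_apply]
        rw [← Finset.sum_coe_sort D (fun d =>
          (if d ∣ a then Real.sqrt (c d) * φ a else 0)
            * (if d ∣ b then Real.sqrt (c d) * φ b else 0))]
        apply Finset.sum_congr rfl
        intro d _
        rw [Matrix.conjTranspose_apply]
        simp [hB]
      rw [step1]
      have step2 : ∀ d ∈ D,
          (if d ∣ a then Real.sqrt (c d) * φ a else 0)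
            * (if d ∣ b then Real.sqrt (c d) * φ b else 0)
          = if d ∣ g then c d * (φ a * φ b) else 0 := by
        intro d hd
        have hcd : 0 ≤ c d := hcnn d (hDsf d hd)
        rcases em (d ∣ a) with h1 | h1 <;> rcases em (d ∣ b) with h2 | h2
        · rw [if_pos h1, if_pos h2, if_pos (Nat.dvd_gcd h1 h2),
            mul_mul_mul_comm, Real.mul_self_sqrt hcd]
        · rw [if_pos h1, if_neg h2,
            if_neg (fun hdg => h2 (hdg.trans (Nat.gcd_dvd_right a b))), mul_zero]
        · rw [if_neg h1, if_pos h2,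
            if_neg (fun hdg => h1 (hdg.trans (Nat.gcd_dvd_left a b))), zero_mul]
        · rw [if_neg h1, if_neg h2,
            if_neg (fun hdg => h1 (hdg.trans (Nat.gcd_dvd_left a b))), zero_mul]
      rw [Finset.sum_congr rfl step2, ← Finset.sum_filter]
      have hfilter : D.filter (fun d => d ∣ g) = g.divisors := by
        ext d
        simp only [Finset.mem_filter, Nat.mem_divisors]
        constructor
        · rintro ⟨_, hdg⟩
          exact ⟨hdg, hg0.ne'⟩
        · rintro ⟨hdg, _⟩
          refine ⟨?_, hdg⟩
          rw [hD, Finset.mem_biUnion]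
          exact ⟨a, haS, Nat.mem_divisors.mpr ⟨hdg.trans (Nat.gcd_dvd_left a b), ha0.ne'⟩⟩
      rw [hfilter, ← Finset.sum_mul]
      ring
    have hsum : ∑ d ∈ g.divisors, c d = ((φ g)^2 * Real.sqrt g)⁻¹ := by
      rw [hc]
      rw [key_identity w hgsf]
      have : ∀ p ∈ g.primeFactors, w p + 1 = ((φ p)^2 * Real.sqrt p)⁻¹ := by
        intro p hp
        simp only [hw]
        rw [one_div]
        ring
      rw [Finset.prod_congr rfl this, Finset.prod_inv_distrib]
      congr 1
      rw [Finset.prod_mul_distrib, Finset.prod_pow, ← phi_squarefree φ hφ1 hφ hgsf]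
      congr 1
      rw [← sqrt_prod_nat]
      congr 1
      rw [← Nat.cast_prod]
      rw [Nat.prod_primeFactors_of_squarefree hgsf]
    -- now compute the left side
    set a' : ℕ := a / g with ha'
    set b' : ℕ := b / g with hb'
    have haa : g * a' = a := Nat.mul_div_cancel' (Nat.gcd_dvd_left a b)
    have hbb : g * b' = b := Nat.mul_div_cancel' (Nat.gcd_dvd_right a b)
    have hcopa : Nat.Coprime g a' := Nat.coprime_of_squarefree_mul (haa ▸ hasf)
    have hcopb : Nat.Coprime g b' := Nat.coprime_of_squarefree_mul (hbb ▸ hbsf)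
    have hcop' : Nat.Coprime a' b' := Nat.coprime_div_gcd_div_gcd hg0
    have hlcm : Nat.lcm a b = g * (a' * b') := by
      have h1 : g * Nat.lcm a b = g * (g * (a' * b')) := by
        rw [Nat.gcd_mul_lcm]
        conv_lhs => rw [← haa, ← hbb]
        ring
      exact Nat.eq_of_mul_eq_mul_left hg0 h1
    have hlcmdiv : Nat.lcm a b / g = a' * b' := by
      rw [hlcm, Nat.mul_div_cancel_left _ hg0]
    have hφa : φ a = φ g * φ a' := by rw [← haa, hφ _ _ hcopa]
    have hφb : φ b = φ g * φ b' := by rw [← hbb, hφ _ _ hcopb]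
    show φ (Nat.lcm a b / Nat.gcd a b) / Real.sqrt (Nat.gcd a b)
        = M ⟨a, haS⟩ ⟨b, hbS⟩
    rw [hrhs, hsum, ← hg, hlcmdiv, hφ _ _ hcop', hφa, hφb]
    field_simp
  rw [hmain]
  exact Matrix.posSemidef_conjTranspose_mul_self B
end

section
/- Let p be prime, K ≥ 2, and let M_K be the K×K matrix with entries M_K(i,j) = φ*(p^{|i−j|}) where φ*(p^m) = (mβ+1)p^{-3m/4} and β = (1−p^{-3/2})/(1+p^{-3/2}). Let U_K be the K×K matrix which is 1 on the diagonal, −p^{-3/4} at positions (i+1,i) for 1 ≤ i ≤ K−1 and at position (K−1,K), and 0 elsewhere. Then A_K := U_Kᵀ M_K U_K satisfies A_K(i,j) = β(1−p^{-3/2})·p^{-3|i−j|/4} for 1 ≤ i,j ≤ K−1 as well as for i = j = K, and A_K(i,K) = A_K(K,j) = 0 for 1 ≤ i,j ≤ K−1. -/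
set_option maxHeartbeats 1600000 in
theorem stmt_17 (p : ℕ) (hp : p.Prime) (K : ℕ) (hK : 2 ≤ K)
    (β : ℝ) (hβ : β = (1 - (p : ℝ) ^ (-(3:ℝ)/2)) / (1 + (p : ℝ) ^ (-(3:ℝ)/2)))
    (φs : ℕ → ℝ) (hφs : ∀ m : ℕ, φs m = ((m : ℝ) * β + 1) * (p : ℝ) ^ (-(3 * (m : ℝ) / 4)))
    (M U A : Matrix (Fin K) (Fin K) ℝ)
    (hM : ∀ i j : Fin K, M i j = φs (((i : ℤ) - (j : ℤ)).natAbs))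
    (hU : ∀ i j : Fin K,
      U i j = if i = j then 1
        else if (i : ℕ) = (j : ℕ) + 1 ∨ ((i : ℕ) = K - 2 ∧ (j : ℕ) = K - 1)
          then -(p : ℝ) ^ (-(3:ℝ)/4) else 0)
    (hA : A = U.transpose * M * U) :
    (∀ i j : Fin K, ((i : ℕ) < K - 1 ∧ (j : ℕ) < K - 1) ∨ (i : ℕ) = K - 1 ∧ (j : ℕ) = K - 1 →
        A i j = β * (1 - (p : ℝ) ^ (-(3:ℝ)/2)) *
          (p : ℝ) ^ (-(3 * ((((i : ℤ) - (j : ℤ)).natAbs : ℝ)) / 4))) ∧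
    (∀ i j : Fin K, (i : ℕ) < K - 1 → (j : ℕ) < K - 1 →
        A i ⟨K - 1, by omega⟩ = 0 ∧ A ⟨K - 1, by omega⟩ j = 0) := by
  have hp0 : (0:ℝ) < p := by exact_mod_cast hp.pos
  set q : ℝ := (p:ℝ) ^ (-(3:ℝ)/4) with hqdef
  have hqq : q * q = (p:ℝ) ^ (-(3:ℝ)/2) := by
    rw [hqdef, ← Real.rpow_add hp0]; norm_num
  have hqpow : ∀ d : ℕ, (p:ℝ) ^ (-(3 * (d:ℝ) / 4)) = q ^ d := by
    intro d
    rw [show -(3 * (d:ℝ) / 4) = (-(3:ℝ)/4) * d by ring, Real.rpow_mul hp0.le,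
      Real.rpow_natCast]
  have hφq : ∀ m : ℕ, φs m = ((m:ℝ) * β + 1) * q ^ m := by
    intro m; rw [hφs, hqpow]
  have hMq : ∀ i j : Fin K, M i j =
      (((((i:ℤ) - (j:ℤ)).natAbs : ℕ):ℝ) * β + 1) * q ^ (((i:ℤ) - (j:ℤ)).natAbs) := by
    intro i j; rw [hM, hφq]
  have hne : (1:ℝ) + (p:ℝ) ^ (-(3:ℝ)/2) ≠ 0 := by positivity
  have hβ2 : β * (1 + q * q) = 1 - q * q := by
    rw [hqq, hβ]; exact div_mul_cancel₀ _ hne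
  have hc : ∀ i : Fin K, ∃ ci : Fin K,
      (ci:ℕ) = if (i:ℕ) < K - 1 then (i:ℕ) + 1 else K - 2 := by
    intro i
    by_cases h : (i:ℕ) < K - 1
    · exact ⟨⟨(i:ℕ)+1, by omega⟩, by simp [h]⟩
    · exact ⟨⟨K-2, by omega⟩, by simp [h]⟩
  choose c hcval using hc
  have hc1 : ∀ i : Fin K, (i:ℕ) < K - 1 → (c i : ℕ) = (i:ℕ) + 1 := by
    intro i h; rw [hcval, if_pos h]
  have hc2 : ∀ i : Fin K, (i:ℕ) = K - 1 → (c i : ℕ) = K - 2 := by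
    intro i h; rw [hcval, if_neg (by omega)]
  have hcd : ∀ i : Fin K, ((i:ℕ) < K-1 ∧ (c i :ℕ) = (i:ℕ)+1) ∨
      ((i:ℕ) = K-1 ∧ (c i:ℕ) = K-2) := by
    intro i
    by_cases h : (i:ℕ) < K-1
    · exact Or.inl ⟨h, hc1 i h⟩
    · have := i.2
      exact Or.inr ⟨by omega, hc2 i (by omega)⟩
  have hU' : ∀ k i : Fin K, U k i =
      (if k = i then (1:ℝ) else 0) - q * (if k = c i then 1 else 0) := by
    intro k i
    have hik := i.2
    have hkk := k.2
    rw [hU]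
    by_cases h1 : k = i
    · subst h1
      have h2 : ¬ (k = c k) := by
        intro he
        have hv : (k:ℕ) = (c k : ℕ) := by rw [← he]
        rcases hcd k with ⟨h, hv'⟩ | ⟨h, hv'⟩ <;> omega
      simp [h2]
    · by_cases h2 : k = c i
      · subst h2
        have h3 : ((c i:ℕ) = (i:ℕ)+1 ∨ ((c i:ℕ) = K-2 ∧ (i:ℕ) = K-1)) := by
          rcases hcd i with ⟨h, hv⟩ | ⟨h, hv⟩
          · exact Or.inl hv
          · exact Or.inr ⟨hv, h⟩
        rw [if_neg h1, if_pos h3, if_neg h1, if_pos rfl]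
        ring
      · have h3 : ¬ ((k:ℕ) = (i:ℕ)+1 ∨ ((k:ℕ) = K-2 ∧ (i:ℕ) = K-1)) := by
          rintro (hx | ⟨hx, hy⟩)
          · rcases hcd i with ⟨h, hv⟩ | ⟨h, hv⟩
            · exact h2 (Fin.ext (by omega))
            · omega
          · rcases hcd i with ⟨h, hv⟩ | ⟨h, hv⟩
            · omega
            · exact h2 (Fin.ext (by omega))
        rw [if_neg h1, if_neg h3, if_neg h1, if_neg h2]
        ring
  have hsum : ∀ (i : Fin K) (g : Fin K → ℝ), (∑ k, U k i * g k) = g i - q * g (c i) := by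
    intro i g
    have he : ∀ k : Fin K, U k i * g k =
        (if k = i then g k else 0) - (if k = c i then q * g k else 0) := by
      intro k; rw [hU']; split_ifs <;> ring
    rw [Finset.sum_congr rfl fun k _ => he k, Finset.sum_sub_distrib]
    simp
  have hAe : ∀ i j : Fin K, A i j =
      M i j - q * M i (c j) - q * M (c i) j + q * q * M (c i) (c j) := by
    intro i j
    have h1 : ∀ l, (U.transpose * M) i l = M i l - q * M (c i) l := by
      intro l
      rw [Matrix.mul_apply]
      simp only [Matrix.transpose_apply]
      exact hsum i fun k => M k l
    rw [hA, Matrix.mul_apply]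
    rw [show (∑ l, (U.transpose * M) i l * U l j)
        = ∑ l, U l j * (U.transpose * M) i l from Finset.sum_congr rfl fun l _ => mul_comm _ _]
    rw [hsum j fun l => (U.transpose * M) i l, h1, h1]
    ring
  constructor
  · rintro i j (⟨hi, hj⟩ | ⟨hi, hj⟩)
    · have hci := hc1 i hi
      have hcj := hc1 j hj
      have hi2 := i.2
      have hj2 := j.2
      rw [hAe, hMq, hMq, hMq, hMq]
      rcases lt_trichotomy (i:ℕ) (j:ℕ) with h | h | h
      · obtain ⟨e, he⟩ : ∃ e, (j:ℕ) = (i:ℕ) + e + 1 := ⟨(j:ℕ) - (i:ℕ) - 1, by omega⟩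
        have n1 : (((i:ℤ) - (j:ℤ)).natAbs) = e + 1 := by omega
        have n2 : (((i:ℤ) - ((c j):ℤ)).natAbs) = e + 2 := by omega
        have n3 : ((((c i):ℤ) - (j:ℤ)).natAbs) = e := by omega
        have n4 : ((((c i):ℤ) - ((c j):ℤ)).natAbs) = e + 1 := by omega
        rw [n1, n2, n3, n4, hqpow, ← hqq]
        push_cast
        ring
      · have hij : i = j := Fin.ext h
        subst hij
        have n1 : (((i:ℤ) - (i:ℤ)).natAbs) = 0 := by omega
        have n2 : (((i:ℤ) - ((c i):ℤ)).natAbs) = 1 := by omega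
        have n3 : ((((c i):ℤ) - (i:ℤ)).natAbs) = 1 := by omega
        have n4 : ((((c i):ℤ) - ((c i):ℤ)).natAbs) = 0 := by omega
        rw [n1, n2, n3, n4, hqpow, ← hqq]
        push_cast
        linear_combination -hβ2
      · obtain ⟨e, he⟩ : ∃ e, (i:ℕ) = (j:ℕ) + e + 1 := ⟨(i:ℕ) - (j:ℕ) - 1, by omega⟩
        have n1 : (((i:ℤ) - (j:ℤ)).natAbs) = e + 1 := by omega
        have n2 : (((i:ℤ) - ((c j):ℤ)).natAbs) = e := by omega
        have n3 : ((((c i):ℤ) - (j:ℤ)).natAbs) = e + 2 := by omega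
        have n4 : ((((c i):ℤ) - ((c j):ℤ)).natAbs) = e + 1 := by omega
        rw [n1, n2, n3, n4, hqpow, ← hqq]
        push_cast
        ring
    · have hij : i = j := Fin.ext (by omega)
      subst hij
      have hci := hc2 i hi
      have hi2 := i.2
      rw [hAe, hMq, hMq, hMq, hMq]
      have n1 : (((i:ℤ) - (i:ℤ)).natAbs) = 0 := by omega
      have n2 : (((i:ℤ) - ((c i):ℤ)).natAbs) = 1 := by omega
      have n3 : ((((c i):ℤ) - (i:ℤ)).natAbs) = 1 := by omega
      have n4 : ((((c i):ℤ) - ((c i):ℤ)).natAbs) = 0 := by omega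
      rw [n1, n2, n3, n4, hqpow, ← hqq]
      push_cast
      linear_combination -hβ2
  · intro i j hi hj
    have hlv : ((⟨K-1, by omega⟩ : Fin K) : ℕ) = K - 1 := rfl
    have hcl := hc2 ⟨K-1, by omega⟩ rfl
    constructor
    · have hci := hc1 i hi
      have hi2 := i.2
      rw [hAe, hMq, hMq, hMq, hMq]
      rcases Nat.lt_or_ge (i:ℕ) (K-2) with h | h
      · obtain ⟨e, he⟩ : ∃ e, K = (i:ℕ) + e + 3 := ⟨K - (i:ℕ) - 3, by omega⟩
        have n1 : (((i:ℤ) - (((⟨K-1, by omega⟩ : Fin K)):ℤ)).natAbs) = e + 2 := by omega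
        have n2 : (((i:ℤ) - ((c ⟨K-1, by omega⟩):ℤ)).natAbs) = e + 1 := by omega
        have n3 : ((((c i):ℤ) - (((⟨K-1, by omega⟩ : Fin K)):ℤ)).natAbs) = e + 1 := by omega
        have n4 : ((((c i):ℤ) - ((c ⟨K-1, by omega⟩):ℤ)).natAbs) = e := by omega
        rw [n1, n2, n3, n4]
        push_cast
        ring
      · have hik : (i:ℕ) = K - 2 := by omega
        have n1 : (((i:ℤ) - (((⟨K-1, by omega⟩ : Fin K)):ℤ)).natAbs) = 1 := by omega
        have n2 : (((i:ℤ) - ((c ⟨K-1, by omega⟩):ℤ)).natAbs) = 0 := by omega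
        have n3 : ((((c i):ℤ) - (((⟨K-1, by omega⟩ : Fin K)):ℤ)).natAbs) = 0 := by omega
        have n4 : ((((c i):ℤ) - ((c ⟨K-1, by omega⟩):ℤ)).natAbs) = 1 := by omega
        rw [n1, n2, n3, n4]
        push_cast
        linear_combination q * hβ2
    · have hcj := hc1 j hj
      have hj2 := j.2
      rw [hAe, hMq, hMq, hMq, hMq]
      rcases Nat.lt_or_ge (j:ℕ) (K-2) with h | h
      · obtain ⟨e, he⟩ : ∃ e, K = (j:ℕ) + e + 3 := ⟨K - (j:ℕ) - 3, by omega⟩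
        have n1 : (((((⟨K-1, by omega⟩ : Fin K)):ℤ) - (j:ℤ)).natAbs) = e + 2 := by omega
        have n2 : (((((⟨K-1, by omega⟩ : Fin K)):ℤ) - ((c j):ℤ)).natAbs) = e + 1 := by omega
        have n3 : ((((c ⟨K-1, by omega⟩):ℤ) - (j:ℤ)).natAbs) = e + 1 := by omega
        have n4 : ((((c ⟨K-1, by omega⟩):ℤ) - ((c j):ℤ)).natAbs) = e := by omega
        rw [n1, n2, n3, n4]
        push_cast
        ring
      · have hjk : (j:ℕ) = K - 2 := by omega
        have n1 : (((((⟨K-1, by omega⟩ : Fin K)):ℤ) - (j:ℤ)).natAbs) = 1 := by omega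
        have n2 : (((((⟨K-1, by omega⟩ : Fin K)):ℤ) - ((c j):ℤ)).natAbs) = 0 := by omega
        have n3 : ((((c ⟨K-1, by omega⟩):ℤ) - (j:ℤ)).natAbs) = 0 := by omega
        have n4 : ((((c ⟨K-1, by omega⟩):ℤ) - ((c j):ℤ)).natAbs) = 1 := by omega
        rw [n1, n2, n3, n4]
        push_cast
        linear_combination q * hβ2
end

section
/- Let p be prime, β = (1−p^{-3/2})/(1+p^{-3/2}), and φ*(p^m) = (mβ+1)p^{-3m/4}. Then for every K ≥ 1, the K×K matrix with entries φ*(p^{|i−j|}) is positive definite. -/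
open Finset Matrix

lemma geom_aux (q : ℝ) (hq : 1 - q^2 ≠ 0) (a : ℕ) :
    (∑ t ∈ range a, q^(2*t+2)) + (q^2/(1-q^2)) * q^(2*a) = q^2/(1-q^2) := by
  induction a with
  | zero => simp
  | succ n ih =>
    rw [Finset.sum_range_succ]
    have h1 : q^(2*(n+1)) = q^(2*n) * q^2 := by ring
    have h2 : q^(2*n+2) = q^(2*n) * q^2 := by ring
    rw [h1, h2]
    have : q^2/(1-q^2) * (1-q^2) = q^2 := by field_simp
    linear_combination ih - q^(2*n) * this

lemma key_sum (q : ℝ) (hq : 1 - q^2 ≠ 0) (K a b : ℕ) (hab : a ≤ b) (hbK : b < K) :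
    (∑ k ∈ range K, q^(((a:ℤ)-(k:ℤ)).natAbs) * q^(((b:ℤ)-(k:ℤ)).natAbs))
      + (q^2/(1-q^2)) * (q^a * q^b) + (q^2/(1-q^2)) * (q^(K-1-a) * q^(K-1-b))
    = (((b - a : ℕ) : ℝ) + 1 + 2*(q^2/(1-q^2))) * q^(b-a) := by
  set c := q^2/(1-q^2) with hc
  set d := b - a with hd
  set f : ℕ → ℝ := fun k => q^(((a:ℤ)-(k:ℤ)).natAbs) * q^(((b:ℤ)-(k:ℤ)).natAbs) with hf
  have hsplit : ∑ k ∈ range K, f k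
      = (∑ k ∈ range a, f k) + (∑ k ∈ Ico a (b+1), f k) + (∑ k ∈ Ico (b+1) K, f k) := by
    rw [Finset.range_eq_Ico, ← Finset.sum_Ico_consecutive f (Nat.zero_le a) (by omega : a ≤ K),
      ← Finset.sum_Ico_consecutive f (by omega : a ≤ b+1) (by omega : b+1 ≤ K)]
    rw [Finset.range_eq_Ico]; ring
  have hS1 : ∑ k ∈ range a, f k = q^d * ∑ t ∈ range a, q^(2*t+2) := by
    rw [← Finset.sum_range_reflect, Finset.mul_sum]
    refine Finset.sum_congr rfl fun t ht => ?_
    rw [Finset.mem_range] at ht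
    have e1 : ((a:ℤ) - ((a - 1 - t : ℕ):ℤ)).natAbs = t + 1 := by omega
    have e2 : ((b:ℤ) - ((a - 1 - t : ℕ):ℤ)).natAbs = d + (t + 1) := by omega
    rw [hf]; simp only [e1, e2]
    rw [pow_add]; ring
  have hS2 : ∑ k ∈ Ico a (b+1), f k = (((b - a : ℕ) : ℝ) + 1) * q^d := by
    have : ∀ k ∈ Ico a (b+1), f k = q^d := by
      intro k hk
      rw [Finset.mem_Ico] at hk
      have e1 : ((a:ℤ) - (k:ℤ)).natAbs = k - a := by omega
      have e2 : ((b:ℤ) - (k:ℤ)).natAbs = b - k := by omega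
      rw [hf]; simp only [e1, e2, ← pow_add]
      congr 1; omega
    rw [Finset.sum_congr rfl this, Finset.sum_const, Nat.card_Ico, nsmul_eq_mul]
    have : b + 1 - a = d + 1 := by omega
    rw [this]; push_cast; ring
  have hS3 : ∑ k ∈ Ico (b+1) K, f k = q^d * ∑ t ∈ range (K-1-b), q^(2*t+2) := by
    rw [Finset.sum_Ico_eq_sum_range, Finset.mul_sum]
    have hKb : K - (b+1) = K - 1 - b := by omega
    rw [hKb]
    refine Finset.sum_congr rfl fun t ht => ?_
    rw [Finset.mem_range] at ht
    have e1 : ((a:ℤ) - ((b + 1 + t : ℕ):ℤ)).natAbs = d + (t + 1) := by omega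
    have e2 : ((b:ℤ) - ((b + 1 + t : ℕ):ℤ)).natAbs = t + 1 := by omega
    rw [hf]; simp only [e1, e2]
    rw [pow_add]; ring
  have hu : q^a * q^b = q^d * q^(2*a) := by
    rw [← pow_add, ← pow_add]; congr 1; omega
  have hv : q^(K-1-a) * q^(K-1-b) = q^d * q^(2*(K-1-b)) := by
    rw [← pow_add, ← pow_add]; congr 1; omega
  calc (∑ k ∈ range K, f k) + c * (q^a * q^b) + c * (q^(K-1-a) * q^(K-1-b))
      = q^d * ((∑ t ∈ range a, q^(2*t+2)) + c * q^(2*a))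
        + (((b - a : ℕ) : ℝ) + 1) * q^d
        + q^d * ((∑ t ∈ range (K-1-b), q^(2*t+2)) + c * q^(2*(K-1-b))) := by
        rw [hsplit, hS1, hS2, hS3, hu, hv]; ring
    _ = (((b - a : ℕ) : ℝ) + 1 + 2*c) * q^d := by
        rw [geom_aux q hq, geom_aux q hq]; ring

lemma step_aux (q : ℝ) (n : ℤ) :
    q * q^((n+1).natAbs) + q * q^((n-1).natAbs) - (1+q^2) * q^(n.natAbs)
    = if n = 0 then q^2 - 1 else 0 := by
  rcases lt_trichotomy n 0 with h | h | h
  · have e0 : n.natAbs = (n+1).natAbs + 1 := by omega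
    have e1 : (n-1).natAbs = (n+1).natAbs + 2 := by omega
    rw [e0, e1, if_neg (by omega)]
    ring
  · subst h; norm_num; ring
  · have e0 : n.natAbs = (n-1).natAbs + 1 := by omega
    have e1 : (n+1).natAbs = (n-1).natAbs + 2 := by omega
    rw [e0, e1, if_neg (by omega)]
    ring

lemma rank1 {n : Type*} [Fintype n] (x u : n → ℝ) :
    (∑ i, x i * u i)^2 = ∑ i, ∑ j, x i * x j * (u i * u j) := by
  rw [sq, Finset.sum_mul_sum]
  exact Finset.sum_congr rfl fun i _ => Finset.sum_congr rfl fun j _ => by ring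

lemma quad_sq {n : Type*} [Fintype n] (x : n → ℝ) (s : Finset ℕ) (G : n → ℕ → ℝ) :
    ∑ i, ∑ j, x i * x j * (∑ k ∈ s, G i k * G j k) = ∑ k ∈ s, (∑ i, x i * G i k)^2 := by
  simp only [Finset.mul_sum]
  calc ∑ i, ∑ j, ∑ k ∈ s, x i * x j * (G i k * G j k)
      = ∑ i, ∑ k ∈ s, ∑ j, x i * x j * (G i k * G j k) :=
        Finset.sum_congr rfl fun i _ => Finset.sum_comm
    _ = ∑ k ∈ s, ∑ i, ∑ j, x i * x j * (G i k * G j k) := Finset.sum_comm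
    _ = ∑ k ∈ s, (∑ i, x i * G i k)^2 :=
        Finset.sum_congr rfl fun k _ => (rank1 x (fun i => G i k)).symm

theorem stmt_19 (p : ℕ) (hp : p.Prime) (K : ℕ) (hK : 1 ≤ K)
    (β : ℝ) (hβ : β = (1 - (p : ℝ) ^ (-(3:ℝ)/2)) / (1 + (p : ℝ) ^ (-(3:ℝ)/2)))
    (φs : ℕ → ℝ) (hφs : ∀ m : ℕ, φs m = ((m : ℝ) * β + 1) * (p : ℝ) ^ (-(3 * (m : ℝ) / 4))) :
    Matrix.PosDef (fun i j : Fin K => φs (((i : ℤ) - (j : ℤ)).natAbs)) := by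
  have hp1 : (1:ℝ) < p := by exact_mod_cast hp.one_lt
  have hp0 : (0:ℝ) < p := by linarith
  set q : ℝ := (p:ℝ) ^ (-(3:ℝ)/4) with hqdef
  have hq0 : 0 < q := Real.rpow_pos_of_pos hp0 _
  have hq1 : q < 1 := Real.rpow_lt_one_of_one_lt_of_neg hp1 (by norm_num)
  have hq2 : q^2 = (p:ℝ)^(-(3:ℝ)/2) := by
    rw [hqdef, ← Real.rpow_natCast ((p:ℝ) ^ (-(3:ℝ)/4)) 2, ← Real.rpow_mul hp0.le]
    norm_num
  have hqm : ∀ m : ℕ, (p:ℝ)^(-(3*(m:ℝ)/4)) = q^m := by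
    intro m
    rw [hqdef, ← Real.rpow_natCast ((p:ℝ) ^ (-(3:ℝ)/4)) m, ← Real.rpow_mul hp0.le]
    congr 1; ring
  have h1q2 : 0 < 1 - q^2 := by nlinarith
  have hne : 1 - q^2 ≠ 0 := ne_of_gt h1q2
  have hβ' : β = (1-q^2)/(1+q^2) := by rw [hβ, hq2]
  have hβpos : 0 < β := by rw [hβ']; positivity
  set c : ℝ := q^2/(1-q^2) with hcdef
  have hcpos : 0 < c := by rw [hcdef]; positivity
  have hβ1 : β * (1 + 2*c) = 1 := by
    rw [hβ', hcdef]; field_simp; ring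
  -- entry formula
  have main : ∀ a b : ℕ, a ≤ b → b < K →
      φs (((a:ℤ)-(b:ℤ)).natAbs)
      = β * ((∑ k ∈ range K, q^(((a:ℤ)-(k:ℤ)).natAbs) * q^(((b:ℤ)-(k:ℤ)).natAbs))
          + c * (q^a * q^b) + c * (q^(K-1-a) * q^(K-1-b))) := by
    intro a b hab hbK
    rw [key_sum q hne K a b hab hbK, hφs, hqm]
    have e : ((a:ℤ)-(b:ℤ)).natAbs = b - a := by omega
    rw [e]
    linear_combination (-(q^(b-a))) * hβ1
  have hM : ∀ i j : Fin K, φs (((i:ℤ)-(j:ℤ)).natAbs)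
      = β * ((∑ k ∈ range K, q^(((i:ℤ)-(k:ℤ)).natAbs) * q^(((j:ℤ)-(k:ℤ)).natAbs))
          + c * (q^(i:ℕ) * q^(j:ℕ)) + c * (q^(K-1-(i:ℕ)) * q^(K-1-(j:ℕ)))) := by
    intro i j
    rcases le_total (i:ℕ) (j:ℕ) with h | h
    · exact main i j h j.isLt
    · have e : ((i:ℤ)-(j:ℤ)).natAbs = ((j:ℤ)-(i:ℤ)).natAbs := by omega
      rw [e, main j i h i.isLt]
      have e2 : (∑ k ∈ range K, q^(((j:ℤ)-(k:ℤ)).natAbs) * q^(((i:ℤ)-(k:ℤ)).natAbs))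
          = ∑ k ∈ range K, q^(((i:ℤ)-(k:ℤ)).natAbs) * q^(((j:ℤ)-(k:ℤ)).natAbs) :=
        Finset.sum_congr rfl fun k _ => mul_comm _ _
      rw [e2]; ring
  refine Matrix.posDef_iff_dotProduct_mulVec.mpr ⟨?_, ?_⟩
  · -- Hermitian
    refine Matrix.IsHermitian.ext fun i j => ?_
    simp only [star_trivial]
    congr 1
    omega
  · intro x hx
    have hstar : star x = x := funext fun i => star_trivial _
    rw [hstar]
    have expand : (x ⬝ᵥ (fun i j : Fin K => φs (((i:ℤ)-(j:ℤ)).natAbs)) *ᵥ x)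
        = β * ((∑ k ∈ range K, (∑ i, x i * q^(((i:ℤ)-(k:ℤ)).natAbs))^2)
            + c * (∑ i, x i * q^(i:ℕ))^2 + c * (∑ i, x i * q^(K-1-(i:ℕ)))^2) := by
      calc (x ⬝ᵥ (fun i j : Fin K => φs (((i:ℤ)-(j:ℤ)).natAbs)) *ᵥ x)
          = ∑ i, ∑ j, (β * (x i * x j * (∑ k ∈ range K, q^(((i:ℤ)-(k:ℤ)).natAbs) * q^(((j:ℤ)-(k:ℤ)).natAbs)))
              + (β*c) * (x i * x j * (q^(i:ℕ) * q^(j:ℕ)))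
              + (β*c) * (x i * x j * (q^(K-1-(i:ℕ)) * q^(K-1-(j:ℕ))))) := by
            conv_lhs => simp only [dotProduct, Matrix.mulVec, Finset.mul_sum]
            refine Finset.sum_congr rfl fun i _ => Finset.sum_congr rfl fun j _ => ?_
            rw [hM i j]; ring
        _ = β * (∑ i, ∑ j, x i * x j * (∑ k ∈ range K, q^(((i:ℤ)-(k:ℤ)).natAbs) * q^(((j:ℤ)-(k:ℤ)).natAbs)))
              + (β*c) * (∑ i, ∑ j, x i * x j * (q^(i:ℕ) * q^(j:ℕ)))
              + (β*c) * (∑ i, ∑ j, x i * x j * (q^(K-1-(i:ℕ)) * q^(K-1-(j:ℕ)))) := by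
            simp only [Finset.sum_add_distrib, Finset.mul_sum]
        _ = β * (∑ k ∈ range K, (∑ i, x i * q^(((i:ℤ)-(k:ℤ)).natAbs))^2)
              + (β*c) * (∑ i, x i * q^(i:ℕ))^2
              + (β*c) * (∑ i, x i * q^(K-1-(i:ℕ)))^2 := by
            rw [quad_sq x (range K) (fun i k => q^(((i:ℤ)-(k:ℤ)).natAbs)),
              ← rank1 x (fun i => q^(i:ℕ)), ← rank1 x (fun i => q^(K-1-(i:ℕ)))]
        _ = β * ((∑ k ∈ range K, (∑ i, x i * q^(((i:ℤ)-(k:ℤ)).natAbs))^2)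
            + c * (∑ i, x i * q^(i:ℕ))^2 + c * (∑ i, x i * q^(K-1-(i:ℕ)))^2) := by ring
    rw [expand]
    by_contra hle
    push_neg at hle
    set S := ∑ k ∈ range K, (∑ i, x i * q^(((i:ℤ)-(k:ℤ)).natAbs))^2 with hSdef
    set U := ∑ i, x i * q^(i:ℕ) with hUdef
    set V := ∑ i, x i * q^(K-1-(i:ℕ)) with hVdef
    have hS0 : 0 ≤ S := Finset.sum_nonneg fun k _ => sq_nonneg _
    have hcU0 : 0 ≤ c * U^2 := mul_nonneg hcpos.le (sq_nonneg U)
    have hcV0 : 0 ≤ c * V^2 := mul_nonneg hcpos.le (sq_nonneg V)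
    have ht : S + c * U^2 + c * V^2 ≤ 0 := by
      by_contra h'
      push_neg at h'
      nlinarith [mul_pos hβpos h']
    have hSz : S = 0 := by linarith
    have hcUz : c * U^2 = 0 := by linarith
    have hcVz : c * V^2 = 0 := by linarith
    have hU : U = 0 := by
      rcases mul_eq_zero.mp hcUz with h | h
      · exact absurd h hcpos.ne'
      · exact sq_eq_zero_iff.mp h
    have hV : V = 0 := by
      rcases mul_eq_zero.mp hcVz with h | h
      · exact absurd h hcpos.ne'
      · exact sq_eq_zero_iff.mp h
    have hAk : ∀ k ∈ range K, (∑ i, x i * q^(((i:ℤ)-(k:ℤ)).natAbs)) = 0 := by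
      intro k hk
      have := (Finset.sum_eq_zero_iff_of_nonneg (fun k _ => sq_nonneg _)).mp hSz k hk
      exact sq_eq_zero_iff.mp this
    -- extended vanishing
    have hA0 : ∀ k : ℤ, -1 ≤ k → k ≤ K → (∑ i, x i * q^(((i:ℤ) - k).natAbs)) = 0 := by
      intro k hk1 hk2
      rcases eq_or_lt_of_le hk1 with h | h
      · -- k = -1
        have : (∑ i, x i * q^(((i:ℤ) - k).natAbs)) = U * q := by
          rw [hUdef, Finset.sum_mul]
          refine Finset.sum_congr rfl fun i _ => ?_
          have e : (((i:ℤ)) - k).natAbs = (i:ℕ) + 1 := by omega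
          rw [e, pow_succ]; ring
        rw [this, hU, zero_mul]
      rcases eq_or_lt_of_le hk2 with h2 | h2
      · -- k = K
        have : (∑ i, x i * q^(((i:ℤ) - k).natAbs)) = V * q := by
          rw [hVdef, Finset.sum_mul]
          refine Finset.sum_congr rfl fun i _ => ?_
          have hi := i.isLt
          have e : (((i:ℤ)) - k).natAbs = (K - 1 - (i:ℕ)) + 1 := by omega
          rw [e, pow_succ]; ring
        rw [this, hV, zero_mul]
      · -- 0 ≤ k < K
        have hk0 : 0 ≤ k := by omega
        have hmem : k.toNat ∈ range K := Finset.mem_range.mpr (by omega)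
        have := hAk k.toNat hmem
        have e : ((k.toNat : ℕ) : ℤ) = k := Int.toNat_of_nonneg hk0
        rw [e] at this
        exact this
    have hq2ne : q^2 - 1 ≠ 0 := by nlinarith
    have hx0 : x = 0 := by
      funext m
      have hid : q * (∑ i, x i * q^(((i:ℤ) - ((m:ℤ) - 1)).natAbs))
          + q * (∑ i, x i * q^(((i:ℤ) - ((m:ℤ) + 1)).natAbs))
          - (1+q^2) * (∑ i, x i * q^(((i:ℤ) - (m:ℤ)).natAbs))
          = (q^2 - 1) * x m := by
        rw [Finset.mul_sum, Finset.mul_sum, Finset.mul_sum, ← Finset.sum_add_distrib,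
          ← Finset.sum_sub_distrib]
        have term : ∀ i : Fin K, i ∈ (univ : Finset (Fin K)) →
            (q * (x i * q^(((i:ℤ) - ((m:ℤ) - 1)).natAbs))
              + q * (x i * q^(((i:ℤ) - ((m:ℤ) + 1)).natAbs))
              - (1+q^2) * (x i * q^(((i:ℤ) - (m:ℤ)).natAbs)))
            = x i * (if ((i:ℤ) - (m:ℤ)) = 0 then q^2 - 1 else 0) := by
          intro i _
          have e1 : (i:ℤ) - ((m:ℤ) - 1) = ((i:ℤ) - (m:ℤ)) + 1 := by ring
          have e2 : (i:ℤ) - ((m:ℤ) + 1) = ((i:ℤ) - (m:ℤ)) - 1 := by ring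
          rw [e1, e2]
          linear_combination (x i) * step_aux q ((i:ℤ) - (m:ℤ))
        rw [Finset.sum_congr rfl term, Finset.sum_eq_single m]
        · simp [mul_comm]
        · intro i _ hne'
          have : ((i:ℤ) - (m:ℤ)) ≠ 0 := by
            intro h
            exact hne' (Fin.ext (by omega))
          rw [if_neg this, mul_zero]
        · intro h
          exact absurd (Finset.mem_univ m) h
      have hm := m.isLt
      have z1 := hA0 ((m:ℤ) - 1) (by omega) (by omega)
      have z2 := hA0 ((m:ℤ) + 1) (by omega) (by omega)
      have z3 := hA0 (m:ℤ) (by omega) (by omega)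
      have : (q^2 - 1) * x m = 0 := by rw [← hid, z1, z2, z3]; ring
      have := mul_eq_zero.mp this
      rcases this with h | h
      · exact absurd h hq2ne
      · simpa using h
    exact hx hx0
end
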